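/- arXiv:1503.07434 — 4 statements merged into one kernel-verified Lean document; each statement's English description precedes it below -/
import Mathlib

section
/- The set B_{ℵ_0} is not a closed subset of ℝ. -/
open Set

/-- The value `∑ dᵢ / qⁱ` (i ≥ 1) of a digit sequence `d` in base `q`
(here `d i` is the digit `d_{i+1}` of the paper). -/
noncomputable def expVal (q : ℝ) (d : ℕ → ℕ) : ℝ := ∑' i : ℕ, (d i : ℝ) / q ^ (i + 1)

/-- The set of `q`-expansions of `x`: 0-1 digit sequences whose value in base `q` is `x`. -/
def expansions (q x : ℝ) : Set (ℕ → ℕ) := {d | (∀ i, d i ≤ 1) ∧ expVal q d = x}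

/-- The map `T_{q,s}(x) = qx - s`. -/
def Tmap (q : ℝ) (s : ℕ) (x : ℝ) : ℝ := q * x - s

/-- `T_{q,d₁⋯dₙ} = T_{q,d₁} ∘ ⋯ ∘ T_{q,dₙ}` (the identity for the empty word). -/
def Tword (q : ℝ) (w : List ℕ) (x : ℝ) : ℝ := w.foldr (fun s y => Tmap q s y) x

/-- The switch region `S_q = [1/q, 1/(q²-q)]`. -/
def switchRegion (q : ℝ) : Set ℝ := Set.Icc (1 / q) (1 / (q ^ 2 - q))

/-- `A₁(q)`: points of the switch region for which both `T_{q,0}(x)` and `T_{q,1}(x)`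
have finitely many `q`-expansions. -/
def A1set (q : ℝ) : Set ℝ :=
  {x ∈ switchRegion q | (expansions q (Tmap q 0 x)).Finite ∧ (expansions q (Tmap q 1 x)).Finite}

/-- `A₂(q)`: points of the switch region for which exactly one of `T_{q,0}(x)`, `T_{q,1}(x)`
has finitely many `q`-expansions. -/
def A2set (q : ℝ) : Set ℝ :=
  {x ∈ switchRegion q | Xor' (expansions q (Tmap q 0 x)).Finite (expansions q (Tmap q 1 x)).Finite}

/-- `A₃(q)`: points of the switch region for which both `T_{q,0}(x)` and `T_{q,1}(x)`
have infinitely many `q`-expansions. -/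
def A3set (q : ℝ) : Set ℝ :=
  {x ∈ switchRegion q | (expansions q (Tmap q 0 x)).Infinite ∧ (expansions q (Tmap q 1 x)).Infinite}

/-- `x` is a `q`-null infinite point: it has infinitely many `q`-expansions and every
branching point of `x` (an image `T_{q,d₁⋯dₙ}(x)` lying in `A₂(q) ∪ A₃(q)`) lies in `A₂(q)`. -/
def IsNullInfinite (q x : ℝ) : Prop :=
  (expansions q x).Infinite ∧
    ∀ w : List ℕ, (∀ s ∈ w, s ≤ 1) →
      Tword q w x ∈ A2set q ∪ A3set q → Tword q w x ∈ A2set q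

/-- The interval `J_q = [(q+q²)/(q⁴-1), (1+q³)/(q⁴-1)]`. -/
def Jset (q : ℝ) : Set ℝ := Set.Icc ((q + q ^ 2) / (q ^ 4 - 1)) ((1 + q ^ 3) / (q ^ 4 - 1))

/-- `B_m` (for a finite `m`): the set of `q ∈ (1,2)` such that some `x ∈ [0, 1/(q-1)]`
has exactly `m` different `q`-expansions. -/
def Bset (m : ℕ) : Set ℝ :=
  {q | q ∈ Set.Ioo (1 : ℝ) 2 ∧
    ∃ x ∈ Set.Icc (0 : ℝ) (1 / (q - 1)), Cardinal.mk ↥(expansions q x) = (m : Cardinal)}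

/-- `B_{ℵ₀}`: the set of `q ∈ (1,2)` such that some `x ∈ [0, 1/(q-1)]` has exactly
countably infinitely many different `q`-expansions. -/
def BalephSet : Set ℝ :=
  {q | q ∈ Set.Ioo (1 : ℝ) 2 ∧
    ∃ x ∈ Set.Icc (0 : ℝ) (1 / (q - 1)), Cardinal.mk ↥(expansions q x) = Cardinal.aleph0}

/-- `U_k`: the set of `x ∈ [0, 1/(q-1)]` having exactly `k` different `q`-expansions. -/
def Uset (q : ℝ) (k : ℕ) : Set ℝ :=
  {x ∈ Set.Icc (0 : ℝ) (1 / (q - 1)) | Cardinal.mk ↥(expansions q x) = (k : Cardinal)}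

/-- `ε_k = (01)^k (10)^∞`; in particular `eps 0 = (10)^∞`. -/
def eps (k : ℕ) : ℕ → ℕ := fun i => if i < 2 * k then i % 2 else (i - 2 * k + 1) % 2

/-- Prepend the digit `s`, repeated `m` times, to the digit sequence `d`. -/
def prep (s m : ℕ) (d : ℕ → ℕ) : ℕ → ℕ := fun i => if i < m then s else d (i - m)

/-- Reflection of a digit sequence: each digit `d` is replaced by `1 - d`. -/
def reflSeq (d : ℕ → ℕ) : ℕ → ℕ := fun i => 1 - d i

/-- Concatenation of a finite word with an infinite digit sequence. -/
def seqCat (w : List ℕ) (t : ℕ → ℕ) : ℕ → ℕ :=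
  fun i => if i < w.length then w.getD i 0 else t (i - w.length)

/-- The sets `E_m` of the paper: for odd `m` (`m = 1, 3`),
`E_m = ⋃_{k≥1} {(01^{m+1}ε_k)_q, (10^m ε_k)_q} \ {(10ε₁)_q}`; for even `m` (`m = 2, 4`),
`E_m = {(01^m(10)^∞)_q} ∪ ⋃_{k≥1} {(01^{m+1}ε_k)_q, (10^m ε_k)_q}`. -/
noncomputable def Eset (q : ℝ) (m : ℕ) : Set ℝ :=
  if m % 2 = 1 then
    (⋃ k : ℕ, {expVal q (prep 0 1 (prep 1 (m + 1) (eps (k + 1)))),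
               expVal q (prep 1 1 (prep 0 m (eps (k + 1))))}) \
      {expVal q (prep 1 1 (prep 0 1 (eps 1)))}
  else
    {expVal q (prep 0 1 (prep 1 m (eps 0)))} ∪
      ⋃ k : ℕ, {expVal q (prep 0 1 (prep 1 (m + 1) (eps (k + 1)))),
                expVal q (prep 1 1 (prep 0 m (eps (k + 1))))}

namespace Stmt2Aux

variable {q : ℝ}

lemma summable_exp (hq : 1 < q) {d : ℕ → ℕ} (hd : ∀ i, d i ≤ 1) :
    Summable (fun i : ℕ => (d i : ℝ) / q ^ (i + 1)) := by
  have hq0 : 0 < q := lt_trans one_pos hq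
  have hgeo : Summable (fun i : ℕ => (1/q) * (1/q) ^ i) :=
    (summable_geometric_of_lt_one (by positivity) (by
      rw [div_lt_one hq0]; exact hq)).mul_left _
  refine hgeo.of_nonneg_of_le (fun i => by positivity) (fun i => ?_)
  have h1 : (1/q) * (1/q) ^ i = 1 / q ^ (i+1) := by
    rw [div_pow, one_pow, pow_succ]; field_simp
  rw [h1]
  gcongr
  exact_mod_cast hd i

lemma tsum_oneGeo (hq : 1 < q) : ∑' i : ℕ, (1:ℝ) / q ^ (i+1) = 1 / (q - 1) := by
  have hq0 : 0 < q := lt_trans one_pos hq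
  have h1 : ∀ i : ℕ, (1:ℝ) / q ^ (i+1) = (1/q) * (1/q)^i := by
    intro i; rw [div_pow, one_pow, pow_succ]; field_simp
  simp_rw [h1]
  rw [tsum_mul_left, tsum_geometric_of_lt_one (by positivity) (by rw [div_lt_one hq0]; exact hq)]
  field_simp

lemma expVal_nonneg (hq : 1 < q) {d : ℕ → ℕ} : 0 ≤ expVal q d := by
  have hq0 : 0 < q := lt_trans one_pos hq
  exact tsum_nonneg (fun i => by positivity)

lemma expVal_le (hq : 1 < q) {d : ℕ → ℕ} (hd : ∀ i, d i ≤ 1) :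
    expVal q d ≤ 1 / (q - 1) := by
  have hq0 : 0 < q := lt_trans one_pos hq
  rw [← tsum_oneGeo hq]
  refine Summable.tsum_le_tsum (fun i => ?_) (summable_exp hq hd) ?_
  · gcongr
    exact_mod_cast hd i
  · have := summable_exp hq (d := fun _ => 1) (fun _ => le_refl 1)
    simpa using this

lemma expVal_shift (hq : 1 < q) {d : ℕ → ℕ} (hd : ∀ i, d i ≤ 1) :
    expVal q d = (d 0 : ℝ) / q + (1/q) * expVal q (fun i => d (i+1)) := by
  have hq0 : 0 < q := lt_trans one_pos hq
  have hs := summable_exp hq hd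
  rw [expVal, Summable.tsum_eq_zero_add hs]
  congr 1
  · norm_num
  · rw [expVal, ← tsum_mul_left]
    congr 1; funext i
    rw [pow_succ]
    ring

end Stmt2Aux

namespace Stmt2Aux

lemma tail_mem (hq : 1 < q) {d : ℕ → ℕ} {x : ℝ} (h : d ∈ expansions q x) :
    (fun i => d (i+1)) ∈ expansions q (q * x - d 0) := by
  obtain ⟨hd, hv⟩ := h
  have hq0 : (0:ℝ) < q := lt_trans one_pos hq
  refine ⟨fun i => hd (i+1), ?_⟩
  have h1 := expVal_shift hq hd
  rw [hv] at h1
  rw [h1]; field_simp; ring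

lemma digit_one (hq : 1 < q) {d : ℕ → ℕ} {x : ℝ} (hx : 1/(q^2 - q) < x)
    (h : d ∈ expansions q x) : d 0 = 1 := by
  have hq0 : (0:ℝ) < q := lt_trans one_pos hq
  have hqq : (0:ℝ) < q^2 - q := by nlinarith
  by_contra hne
  have h0 : d 0 = 0 := by have := h.1 0; omega
  have h1 := expVal_shift hq h.1
  rw [h.2, h0] at h1
  have h2 : expVal q (fun i => d (i+1)) ≤ 1/(q-1) := expVal_le hq (fun i => h.1 (i+1))
  have h3 : x ≤ (1/q) * (1/(q-1)) := by
    rw [h1]; push_cast; rw [zero_div, zero_add]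
    apply mul_le_mul_of_nonneg_left h2 (by positivity)
  have h4 : (1/q) * (1/(q-1) : ℝ) = 1/(q^2-q) := by
    rw [div_mul_div_comm, one_mul]; congr 1; ring
  rw [h4] at h3
  linarith

lemma digit_zero (hq : 1 < q) {d : ℕ → ℕ} {x : ℝ} (hx : x < 1/q)
    (h : d ∈ expansions q x) : d 0 = 0 := by
  have hq0 : (0:ℝ) < q := lt_trans one_pos hq
  by_contra hne
  have h0 : d 0 = 1 := by have := h.1 0; omega
  have h1 := expVal_shift hq h.1
  rw [h.2, h0] at h1
  have h2 : 0 ≤ expVal q (fun i => d (i+1)) := expVal_nonneg hq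
  have h3 : 0 ≤ 1/q * expVal q (fun i => d (i+1)) := mul_nonneg (by positivity) h2
  have : 1/q ≤ x := by rw [h1]; push_cast; linarith
  linarith

lemma zero_unique (hq : 1 < q) : ∀ (i : ℕ), ∀ d ∈ expansions q 0, d i = 0 := by
  have hq0 : (0:ℝ) < q := lt_trans one_pos hq
  intro i
  induction i with
  | zero => intro d hd; exact digit_zero hq (by positivity) hd
  | succ i ih =>
    intro d hd
    have ht := tail_mem hq hd
    rw [digit_zero hq (by positivity) hd] at ht
    norm_num at ht
    exact ih _ ht

def cns (s : ℕ) (d : ℕ → ℕ) : ℕ → ℕ := fun i => Nat.casesOn i s d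

lemma cns_mem (hq : 1 < q) {s : ℕ} {d : ℕ → ℕ} {x : ℝ} (hs : s ≤ 1)
    (h : d ∈ expansions q x) : cns s d ∈ expansions q ((s + x)/q) := by
  have hq0 : (0:ℝ) < q := lt_trans one_pos hq
  have hb : ∀ i, cns s d i ≤ 1 := by
    intro i; cases i with
    | zero => exact hs
    | succ j => exact h.1 j
  refine ⟨hb, ?_⟩
  have h1 := expVal_shift hq hb
  have h2 : (fun i => cns s d (i+1)) = d := rfl
  rw [h2, h.2] at h1
  rw [h1]
  show (s:ℝ)/q + 1/q * x = _
  field_simp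

end Stmt2Aux

namespace Stmt2Aux

noncomputable def yv (q : ℝ) (m : ℕ) : ℝ := (1 - (1/q)^m)/(q-1)

lemma yv_zero : yv q 0 = 0 := by simp [yv]

lemma yv_one (hq : 1 < q) : yv q 1 = 1/q := by
  have hq0 : (0:ℝ) < q := lt_trans one_pos hq
  have hq1 : q - 1 ≠ 0 := by linarith
  unfold yv
  rw [pow_one]
  field_simp

lemma yv_succ (hq : 1 < q) (m : ℕ) : yv q (m+1) = (1 + yv q m)/q := by
  have hq0 : (0:ℝ) < q := lt_trans one_pos hq
  have hq1 : q - 1 ≠ 0 := by linarith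
  unfold yv
  rw [pow_succ]
  field_simp
  ring

lemma yv_step (hq : 1 < q) (m : ℕ) : q * yv q (m+1) - 1 = yv q m := by
  have hq0 : (0:ℝ) < q := lt_trans one_pos hq
  rw [yv_succ hq]
  field_simp
  ring

lemma yv_big (hq : 1 < q) (hφ : 1 < q^2 - q) {m : ℕ} (hm : 2 ≤ m) :
    1/(q^2 - q) < yv q m := by
  have hq0 : (0:ℝ) < q := lt_trans one_pos hq
  have hq1 : (0:ℝ) < q - 1 := by linarith
  have hqq : (0:ℝ) < q^2 - q := by linarith
  have hple : (1/q)^m ≤ (1/q)^2 :=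
    pow_le_pow_of_le_one (by positivity) (by rw [div_le_one hq0]; linarith) hm
  have h2 : yv q 2 ≤ yv q m := by
    unfold yv
    gcongr
  refine lt_of_lt_of_le ?_ h2
  unfold yv
  rw [div_lt_div_iff₀ hqq hq1]
  have h3 : (1 - (1/q)^2) = (q^2 - 1)/q^2 := by field_simp
  rw [h3]
  rw [div_mul_eq_mul_div, lt_div_iff₀ (by positivity)]
  nlinarith

lemma force (hq : 1 < q) (hφ : 1 < q^2 - q) :
    ∀ m, 2 ≤ m → ∀ d ∈ expansions q (yv q m),
      (∀ j, j < m - 1 → d j = 1) ∧ (fun i => d (i + (m-1))) ∈ expansions q (yv q 1) := by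
  intro m hm
  induction m, hm using Nat.le_induction with
  | base =>
    intro d hd
    have h0 : d 0 = 1 := digit_one hq (yv_big hq hφ (le_refl 2)) hd
    have ht := tail_mem hq hd
    rw [h0] at ht
    push_cast at ht
    rw [show q * yv q 2 - 1 = yv q 1 from yv_step hq 1] at ht
    refine ⟨fun j hj => ?_, ?_⟩
    · interval_cases j
      exact h0
    · exact ht
  | succ m hm ih =>
    intro d hd
    have h0 : d 0 = 1 := digit_one hq (yv_big hq hφ (by omega)) hd
    have ht := tail_mem hq hd
    rw [h0] at ht
    push_cast at ht
    rw [show q * yv q (m+1) - 1 = yv q m from yv_step hq m] at ht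
    obtain ⟨ih1, ih2⟩ := ih _ ht
    constructor
    · intro j hj
      match j with
      | 0 => exact h0
      | (j'+1) => exact ih1 j' (by omega)
    · have : (fun i => d (i + (m + 1 - 1))) = (fun i => (fun k => d (k+1)) (i + (m-1))) := by
        funext i; congr 1; omega
      rw [this]
      exact ih2

end Stmt2Aux

namespace Stmt2Aux

def prepOnes (m : ℕ) (d : ℕ → ℕ) : ℕ → ℕ := Nat.rec d (fun _ ih => cns 1 ih) m

def dseq (n : ℕ) : ℕ → ℕ → ℕ :=
  fun k => Nat.rec (fun i => if i < n then 1 else 0)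
    (fun _ ih => prepOnes (n-1) (cns 0 ih)) k

def dinf (n : ℕ) : ℕ → ℕ := fun j => if j % n < n - 1 then 1 else 0

lemma prepOnes_apply (m : ℕ) (d : ℕ → ℕ) (j : ℕ) :
    prepOnes m d j = if j < m then 1 else d (j - m) := by
  induction m generalizing j with
  | zero => simp [prepOnes]
  | succ m ih =>
    show cns 1 (prepOnes m d) j = _
    cases j with
    | zero => simp [cns]
    | succ j =>
      show prepOnes m d j = _
      rw [ih]
      by_cases h : j < m
      · rw [if_pos h, if_pos (by omega)]
      · rw [if_neg h, if_neg (by omega)]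
        congr 1; omega

lemma dseq_zero_apply (n j : ℕ) : dseq n 0 j = if j < n then 1 else 0 := rfl

lemma dseq_succ_lt {n j : ℕ} (k : ℕ) (hj : j < n - 1) : dseq n (k+1) j = 1 := by
  show prepOnes (n-1) (cns 0 (dseq n k)) j = 1
  rw [prepOnes_apply, if_pos hj]

lemma dseq_succ_mid {n j : ℕ} (k : ℕ) (hj1 : n - 1 ≤ j) (hj2 : j < n) :
    dseq n (k+1) j = 0 := by
  show prepOnes (n-1) (cns 0 (dseq n k)) j = 0
  rw [prepOnes_apply, if_neg (by omega)]
  have : j - (n-1) = 0 := by omega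
  rw [this]
  rfl

lemma dseq_succ_ge {n j : ℕ} (k : ℕ) (hn : 1 ≤ n) (hj : n ≤ j) :
    dseq n (k+1) j = dseq n k (j - n) := by
  show prepOnes (n-1) (cns 0 (dseq n k)) j = _
  rw [prepOnes_apply, if_neg (by omega)]
  have h1 : j - (n-1) = (j - n) + 1 := by omega
  rw [h1]
  rfl

lemma dseq_zero_of_ge {n : ℕ} (hn : 1 ≤ n) :
    ∀ k j, k * n + n ≤ j → dseq n k j = 0 := by
  intro k
  induction k with
  | zero => intro j hj; rw [dseq_zero_apply, if_neg (by omega)]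
  | succ k ih =>
    intro j hj
    have hmul : (k+1) * n = k * n + n := by ring
    rw [dseq_succ_ge k hn (by omega)]
    exact ih _ (by omega)

lemma dseq_last {n : ℕ} (hn : 1 ≤ n) : ∀ k, dseq n k (k * n + n - 1) = 1 := by
  intro k
  induction k with
  | zero => rw [dseq_zero_apply, if_pos (by omega)]
  | succ k ih =>
    have hmul : (k+1) * n = k * n + n := by ring
    rw [dseq_succ_ge k hn (by omega)]
    have h2 : (k+1) * n + n - 1 - n = k * n + n - 1 := by omega
    rw [h2]
    exact ih

lemma dseq_injective {n : ℕ} (hn : 1 ≤ n) : Function.Injective (dseq n) := by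
  have key : ∀ a b, a < b → dseq n a ≠ dseq n b := by
    intro a b hab he
    have h1 : dseq n b (b * n + n - 1) = 1 := dseq_last hn b
    have hm : (a+1) * n ≤ b * n := Nat.mul_le_mul_right n hab
    have hm2 : (a+1) * n = a * n + n := by ring
    have h2 : dseq n a (b * n + n - 1) = 0 :=
      dseq_zero_of_ge hn a _ (by omega)
    rw [he] at h2
    omega
  intro a b hab
  rcases lt_trichotomy a b with h | h | h
  · exact absurd hab (key a b h)
  · exact h
  · exact absurd hab.symm (key b a h)

variable {q : ℝ}

lemma prepOnes_mem (hq : 1 < q) (m : ℕ) {d : ℕ → ℕ} {m' : ℕ}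
    (h : d ∈ expansions q (yv q m')) :
    prepOnes m d ∈ expansions q (yv q (m' + m)) := by
  induction m with
  | zero => exact h
  | succ m ih =>
    have := cns_mem hq (s := 1) le_rfl ih
    have heq : ((1:ℕ) + yv q (m' + m))/q = yv q (m' + (m+1)) := by
      push_cast
      rw [show m' + (m+1) = (m' + m) + 1 from rfl, yv_succ hq]
    rw [heq] at this
    exact this

lemma zeroseq_mem (hq : 1 < q) : (fun _ : ℕ => 0) ∈ expansions q (yv q 0) := by
  refine ⟨fun i => Nat.zero_le 1, ?_⟩
  rw [yv_zero, expVal]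
  simp

lemma dseq_mem (hq : 1 < q) {n : ℕ} (hn : 1 ≤ n) (hroot : yv q n = 1) :
    ∀ k, dseq n k ∈ expansions q 1 := by
  intro k
  induction k with
  | zero =>
    have h0 := prepOnes_mem hq n (zeroseq_mem hq)
    rw [zero_add, hroot] at h0
    have he : prepOnes n (fun _ : ℕ => 0) = dseq n 0 := by
      funext j
      rw [prepOnes_apply, dseq_zero_apply]
    rwa [he] at h0
  | succ k ih =>
    have h1 := cns_mem hq (s := 0) (by omega) ih
    have h2 : ((0:ℕ) + (1:ℝ))/q = yv q 1 := by
      rw [yv_one hq]; push_cast; ring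
    rw [h2] at h1
    have h3 := prepOnes_mem hq (n-1) h1
    rw [show 1 + (n-1) = n by omega, hroot] at h3
    exact h3

end Stmt2Aux

namespace Stmt2Aux

lemma char (hq : 1 < q) (hφ : 1 < q^2 - q) {n : ℕ} (hn : 2 ≤ n) (hroot : yv q n = 1) :
    ∀ i : ℕ, ∀ d ∈ expansions q 1, d i ≠ dinf n i → ∃ k, d = dseq n k := by
  intro i
  induction i using Nat.strong_induction_on with
  | _ i ih =>
    intro d hd hdev
    have hq0 : (0:ℝ) < q := lt_trans one_pos hq
    have hd1 : d ∈ expansions q (yv q n) := by rwa [hroot]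
    obtain ⟨hforce, htail⟩ := force hq hφ n hn d hd1
    rw [yv_one hq] at htail
    have he0 : (fun i => d (i + (n-1))) 0 = d (n-1) := congrArg d (Nat.zero_add _)
    have ht2 := tail_mem hq htail
    have hcases : d (n-1) = 0 ∨ d (n-1) = 1 := by
      have := hd.1 (n-1); omega
    rcases hcases with hcase | hcase
    · -- loop case: continue to expansion of 1
      have hv : q * (1/q) - (((fun i => d (i + (n-1))) 0 : ℕ) : ℝ) = 1 := by
        rw [he0, hcase]; push_cast; field_simp; norm_num
      rw [hv] at ht2
      have hee : (fun i => (fun i => d (i + (n-1))) (i+1)) = (fun i => d (i + n)) :=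
        funext fun i => congrArg d (by omega)
      rw [hee] at ht2
      have hagree : ∀ j, j < n → d j = dinf n j := by
        intro j hj
        unfold dinf
        rw [Nat.mod_eq_of_lt hj]
        by_cases h1 : j < n - 1
        · rw [if_pos h1]; exact hforce j h1
        · rw [if_neg h1]
          have : j = n - 1 := by omega
          rw [this, hcase]
      have hin : n ≤ i := by
        by_contra h
        exact hdev (hagree i (by omega))
      have hper : dinf n i = dinf n (i - n) := by
        unfold dinf
        congr 1
        conv_lhs => rw [show i = (i - n) + n by omega, Nat.add_mod_right]
      have hdev2 : (fun i => d (i + n)) (i - n) ≠ dinf n (i - n) := by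
        have : (i - n) + n = i := by omega
        rw [show (fun i => d (i + n)) (i - n) = d i from congrArg d this, ← hper]
        exact hdev
      obtain ⟨k, hk⟩ := ih (i - n) (by omega) _ ht2 hdev2
      refine ⟨k + 1, funext fun j => ?_⟩
      by_cases h1 : j < n - 1
      · rw [dseq_succ_lt k h1]; exact hforce j h1
      by_cases h2 : j < n
      · rw [dseq_succ_mid k (by omega) h2]
        have : j = n - 1 := by omega
        rw [this, hcase]
      · rw [dseq_succ_ge k (by omega) (by omega)]
        have h3 : d j = (fun i => d (i + n)) (j - n) := congrArg d (by omega)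
        rw [h3, hk]
    · -- terminating case: d = dseq n 0
      have hv : q * (1/q) - (((fun i => d (i + (n-1))) 0 : ℕ) : ℝ) = 0 := by
        rw [he0, hcase]; push_cast; field_simp; norm_num
      rw [hv] at ht2
      have hz : ∀ m, d (m + 1 + (n-1)) = 0 := fun m => zero_unique hq m _ ht2
      refine ⟨0, funext fun j => ?_⟩
      by_cases h1 : j < n - 1
      · rw [dseq_zero_apply, if_pos (by omega)]; exact hforce j h1
      by_cases h2 : j < n
      · rw [dseq_zero_apply, if_pos h2]
        have : j = n - 1 := by omega
        rw [this, hcase]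
      · rw [dseq_zero_apply, if_neg h2]
        have hj : d j = d ((j - n) + 1 + (n-1)) := congrArg d (by omega)
        rw [hj]
        exact hz (j - n)

lemma card_aleph0 (hq : 1 < q) (hφ : 1 < q^2 - q) {n : ℕ} (hn : 2 ≤ n)
    (hroot : yv q n = 1) :
    Cardinal.mk ↥(expansions q 1) = Cardinal.aleph0 := by
  have hsub : expansions q 1 ⊆ insert (dinf n) (Set.range (dseq n)) := by
    intro d hd
    by_cases h : ∀ i, d i = dinf n i
    · left; exact funext h
    · push_neg at h
      obtain ⟨i, hi⟩ := h
      obtain ⟨k, hk⟩ := char hq hφ hn hroot i d hd hi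
      right; exact ⟨k, hk.symm⟩
  have hcount : (expansions q 1).Countable :=
    ((Set.countable_range (dseq n)).insert (dinf n)).mono hsub
  have hinf : (expansions q 1).Infinite :=
    Set.infinite_of_injective_forall_mem (dseq_injective (by omega))
      (dseq_mem hq (by omega) hroot)
  haveI := hcount.to_subtype
  haveI := hinf.to_subtype
  exact le_antisymm Cardinal.mk_le_aleph0 (Cardinal.aleph0_le_mk _)

end Stmt2Aux

namespace Stmt2Aux

lemma two_mul_le_two_pow {n : ℕ} (hn : 2 ≤ n) : 2 * n ≤ 2 ^ n := by
  induction n, hn using Nat.le_induction with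
  | base => norm_num
  | succ n hn ih =>
    have h2 : 2 ≤ 2 ^ n := Nat.one_lt_two_pow_iff.mpr (by omega)
    calc 2 * (n + 1) = 2 * n + 2 := by ring
    _ ≤ 2 ^ n + 2 ^ n := by omega
    _ = 2 ^ (n + 1) := by ring

lemma exists_root (n : ℕ) (hn : 3 ≤ n) :
    ∃ q : ℝ, 2 - (1/2)^(n-1) ≤ q ∧ q ≤ 2 - (1/2)^n ∧ q ^ n * (2 - q) = 1 := by
  set a : ℝ := 2 - (1/2)^(n-1) with hadef
  set b : ℝ := 2 - (1/2)^n with hbdef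
  have hpow : ((1:ℝ)/2)^n ≤ (1/2)^(n-1) :=
    pow_le_pow_of_le_one (by norm_num) (by norm_num) (by omega)
  have hple : ((1:ℝ)/2)^(n-1) ≤ (1/2)^2 :=
    pow_le_pow_of_le_one (by norm_num) (by norm_num) (by omega)
  have hpos : (0:ℝ) < (1/2)^n := by positivity
  have hq14 : ((1:ℝ)/2)^2 = 1/4 := by norm_num
  have hab : a ≤ b := by rw [hadef, hbdef]; linarith
  have hcont : ContinuousOn (fun q : ℝ => q ^ n * (2 - q)) (Icc a b) :=
    ((continuous_pow n).mul (continuous_const.sub continuous_id)).continuousOn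
  have hps : ((1:ℝ)/2)^n = (1/2)^(n-1) * (1/2) := by
    rw [← pow_succ]; congr 1; omega
  have hb0 : (0:ℝ) ≤ b := by rw [hbdef]; nlinarith
  have hfb : b ^ n * (2 - b) ≤ 1 := by
    have h2b : 2 - b = (1/2)^n := by rw [hbdef]; ring
    rw [h2b, ← mul_pow]
    apply pow_le_one₀ (by nlinarith) (by rw [hbdef]; nlinarith)
  have hfa : 1 ≤ a ^ n * (2 - a) := by
    have h2a : 2 - a = (1/2)^(n-1) := by rw [hadef]; ring
    have hsplit : ((1:ℝ)/2)^(n-1) = 2 * (1/2)^n := by rw [hps]; ring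
    have hmp : a ^ n * (2 * (1/2)^n) = 2 * (a * (1/2))^n := by rw [mul_pow]; ring
    rw [h2a, hsplit, hmp]
    have hmat : a * (1/2) = 1 + (-(1/2)^n) := by rw [hadef]; rw [hsplit]; ring
    rw [hmat]
    have hle1 : ((1:ℝ)/2)^n ≤ 1 := by nlinarith
    have hber : 1 + (n:ℝ) * (-(1/2)^n) ≤ (1 + (-(1/2)^n))^n :=
      one_add_mul_le_pow (by nlinarith) n
    have hnat : 2 * n ≤ 2 ^ n := two_mul_le_two_pow (by omega)
    have hnr : (2:ℝ) * n ≤ 2 ^ n := by exact_mod_cast hnat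
    have h2pos : (0:ℝ) < 2 ^ n := by positivity
    have hhalf : ((1:ℝ)/2)^n = (2^n)⁻¹ := by
      rw [div_pow, one_pow, one_div]
    have hnb : (n:ℝ) * (1/2)^n ≤ 1/2 := by
      rw [hhalf]
      rw [mul_inv_le_iff₀ h2pos]
      linarith
    nlinarith
  obtain ⟨q, hqmem, hq⟩ := intermediate_value_Icc' hab hcont (Set.mem_Icc.mpr ⟨hfb, hfa⟩)
  exact ⟨q, hqmem.1, hqmem.2, hq⟩

lemma root_in_Baleph {q : ℝ} {n : ℕ} (hn : 3 ≤ n)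
    (ha : 2 - (1/2:ℝ)^(n-1) ≤ q) (hb : q ≤ 2 - (1/2:ℝ)^n)
    (hr : q ^ n * (2 - q) = 1) : q ∈ BalephSet := by
  have hple : ((1:ℝ)/2)^(n-1) ≤ (1/2)^2 :=
    pow_le_pow_of_le_one (by norm_num) (by norm_num) (by omega)
  have hq14 : ((1:ℝ)/2)^2 = 1/4 := by norm_num
  have hq74 : (7/4:ℝ) ≤ q := by nlinarith
  have hpos : (0:ℝ) < (1/2)^n := by positivity
  have hq2 : q < 2 := by linarith
  have hq1 : 1 < q := by linarith
  have hφ : 1 < q^2 - q := by nlinarith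
  have hq0 : (0:ℝ) < q := by linarith
  have hqn : (0:ℝ) < q^n := by positivity
  have hroot : yv q n = 1 := by
    unfold yv
    rw [div_eq_one_iff_eq (by intro h; exact absurd h (by intro h2; linarith) : q - 1 ≠ 0)]
    rw [div_pow, one_pow]
    field_simp
    linear_combination hr
  refine ⟨⟨hq1, hq2⟩, 1, ⟨by norm_num, ?_⟩, card_aleph0 hq1 hφ (by omega) hroot⟩
  rw [le_div_iff₀ (by linarith)]
  linarith

end Stmt2Aux


open Stmt2Aux

/-- `B_{ℵ₀}` is not a closed subset of `ℝ`. -/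
theorem stmt2 : ¬ IsClosed BalephSet := by
  intro hcl
  have hkey : ∀ m : ℕ, ∃ q : ℝ, (2 - (1/2:ℝ)^(m+2) ≤ q ∧ q ≤ 2) ∧ q ∈ BalephSet := by
    intro m
    obtain ⟨q, h1, h2, h3⟩ := exists_root (m+3) (by omega)
    refine ⟨q, ⟨?_, ?_⟩, root_in_Baleph (by omega) h1 h2 h3⟩
    · rw [show m + 3 - 1 = m + 2 by omega] at h1; exact h1
    · have : (0:ℝ) < (1/2)^(m+3) := by positivity
      linarith
  choose f hf hmem using hkey
  have htend : Filter.Tendsto f Filter.atTop (nhds 2) := by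
    apply tendsto_of_tendsto_of_tendsto_of_le_of_le
      (g := fun m : ℕ => 2 - (1/2:ℝ)^(m+2)) (h := fun _ : ℕ => (2:ℝ))
    · have h0 : Filter.Tendsto (fun m : ℕ => ((1/2:ℝ))^(m+2)) Filter.atTop (nhds 0) :=
        (tendsto_pow_atTop_nhds_zero_of_lt_one (by norm_num) (by norm_num)).comp
          (Filter.tendsto_add_atTop_nat 2)
      simpa using Filter.Tendsto.const_sub 2 h0
    · exact tendsto_const_nhds
    · exact fun m => (hf m).1
    · exact fun m => (hf m).2
  have h2 : (2:ℝ) ∈ BalephSet := hcl.mem_of_tendsto htend (Filter.Eventually.of_forall hmem)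
  exact absurd h2.1.2 (lt_irrefl 2)
end

section
/- The set U_1 of points in [0, 1/(q_2−1)] with a unique q_2-expansion equals { (0^∞)_{q_2}, (1^∞)_{q_2} } ∪ ⋃_{k≥0} { (0^k(10)^∞)_{q_2}, (1^k(01)^∞)_{q_2} }. -/
open Set

namespace S6


variable {q : ℝ}

lemma geom_eq (h0 : (0:ℝ) < q) (i : ℕ) : (1/q) * (1/q)^i = 1/q^(i+1) := by
  rw [div_pow, one_pow, pow_succ]
  rw [div_mul_div_comm, one_mul, mul_comm]

lemma dig_le_geom (h0 : (0:ℝ) < q) {d : ℕ → ℕ} (hd : ∀ i, d i ≤ 1) (i : ℕ) :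
    (d i : ℝ) / q ^ (i+1) ≤ (1/q) * (1/q)^i := by
  rw [geom_eq h0]
  have hb : (d i : ℝ) ≤ 1 := by exact_mod_cast hd i
  gcongr

lemma summable_aux (hq : 1 < q) (d : ℕ → ℕ) (hd : ∀ i, d i ≤ 1) :
    Summable (fun i => (d i : ℝ) / q ^ (i + 1)) := by
  have h0 : (0:ℝ) < q := by linarith
  have h1 : (0:ℝ) ≤ 1/q := by positivity
  have h2 : 1/q < 1 := by rw [div_lt_one h0]; exact hq
  exact Summable.of_nonneg_of_le (fun i => by positivity) (dig_le_geom h0 hd)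
    ((summable_geometric_of_lt_one h1 h2).mul_left (1/q))

lemma expVal_step (hq : 1 < q) (d : ℕ → ℕ) (hd : ∀ i, d i ≤ 1) :
    expVal q d = ((d 0 : ℝ) + expVal q (fun i => d (i + 1))) / q := by
  have h0 : (0:ℝ) < q := by linarith
  have hq0 : q ≠ 0 := ne_of_gt h0
  have hs := summable_aux hq d hd
  unfold expVal
  rw [Summable.tsum_eq_zero_add hs]
  have h : ∀ i : ℕ, (d (i+1) : ℝ) / q ^ (i+1+1) = (1/q) * ((d (i+1) : ℝ) / q ^ (i+1)) := by
    intro i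
    rw [pow_succ]
    ring
  rw [tsum_congr h, tsum_mul_left]
  field_simp; ring

lemma expVal_nonneg (hq : 1 < q) (d : ℕ → ℕ) : 0 ≤ expVal q d := by
  have h0 : (0:ℝ) < q := by linarith
  exact tsum_nonneg (fun i => by positivity)

lemma expVal_le (hq : 1 < q) (d : ℕ → ℕ) (hd : ∀ i, d i ≤ 1) :
    expVal q d ≤ 1 / (q - 1) := by
  have h0 : (0:ℝ) < q := by linarith
  have h1 : (0:ℝ) ≤ 1/q := by positivity
  have h2 : 1/q < 1 := by rw [div_lt_one h0]; exact hq
  have hgs : Summable (fun i : ℕ => (1/q) * (1/q)^i) :=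
    (summable_geometric_of_lt_one h1 h2).mul_left (1/q)
  have hle : expVal q d ≤ ∑' i : ℕ, (1/q) * (1/q)^i :=
    Summable.tsum_le_tsum (dig_le_geom h0 hd) (summable_aux hq d hd) hgs
  refine hle.trans ?_
  rw [tsum_mul_left, tsum_geometric_of_lt_one h1 h2]
  apply le_of_eq
  have h3 : q - 1 ≠ 0 := by linarith
  have h4 : (1:ℝ) - 1/q ≠ 0 := by
    rw [sub_ne_zero]
    intro h
    rw [← h] at h2
    exact lt_irrefl _ h2
  field_simp

lemma expVal_split (hq : 1 < q) (d : ℕ → ℕ) (hd : ∀ i, d i ≤ 1) (n : ℕ) :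
    expVal q d = (∑ i ∈ Finset.range n, (d i : ℝ) / q ^ (i+1))
      + expVal q (fun i => d (i + n)) / q ^ n := by
  have h0 : (0:ℝ) < q := by linarith
  induction n with
  | zero => simp
  | succ n ih =>
    rw [ih, Finset.sum_range_succ]
    have hstep := expVal_step hq (fun i => d (i + n)) (fun i => hd _)
    simp only [zero_add] at hstep
    have he : (fun i => d (i + (n+1))) = (fun i => d ((i + 1) + n)) := by
      funext i; congr 1; omega
    rw [he, hstep]
    have hqn : q ^ n ≠ 0 := by positivity
    have hq0 : q ≠ 0 := ne_of_gt h0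
    field_simp
    ring

variable {q : ℝ}

noncomputable def grem (q y : ℝ) : ℕ → ℝ
  | 0 => y
  | n+1 => if 1 ≤ q * grem q y n then q * grem q y n - 1 else q * grem q y n

noncomputable def gdig (q y : ℝ) (n : ℕ) : ℕ := if 1 ≤ q * grem q y n then 1 else 0

lemma gdig_le (q y : ℝ) (n : ℕ) : gdig q y n ≤ 1 := by
  unfold gdig; split <;> simp

lemma grem_succ (q y : ℝ) (n : ℕ) :
    grem q y (n+1) = q * grem q y n - (gdig q y n : ℝ) := by
  show (if 1 ≤ q * grem q y n then q * grem q y n - 1 else q * grem q y n) = _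
  unfold gdig
  split <;> simp

lemma grem_mem (hq : 1 < q) (hq2 : q < 2) {y : ℝ} (hy : y ∈ Icc 0 (1/(q-1))) :
    ∀ n, grem q y n ∈ Icc 0 (1/(q-1)) := by
  intro n
  induction n with
  | zero => exact hy
  | succ n ih =>
    obtain ⟨h1, h2⟩ := ih
    have hq1 : (0:ℝ) < q - 1 := by linarith
    show (if 1 ≤ q * grem q y n then q * grem q y n - 1 else q * grem q y n) ∈ _
    by_cases h : 1 ≤ q * grem q y n
    · rw [if_pos h]
      constructor
      · linarith
      · have : q * grem q y n ≤ q * (1/(q-1)) := by nlinarith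
        have h3 : q * (1/(q-1)) - 1 = 1/(q-1) := by field_simp; ring
        linarith
    · rw [if_neg h]
      push_neg at h
      constructor
      · nlinarith
      · have : (1:ℝ) ≤ 1/(q-1) := by
          rw [le_div_iff₀ hq1]; linarith
        linarith

lemma grem_eq (hq : 1 < q) (y : ℝ) :
    ∀ n, (∑ i ∈ Finset.range n, (gdig q y i : ℝ) / q ^ (i+1)) = y - grem q y n / q ^ n := by
  have h0 : (0:ℝ) < q := by linarith
  intro n
  induction n with
  | zero => simp [grem]
  | succ n ih =>
    rw [Finset.sum_range_succ, ih, grem_succ]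
    have hqn : q ^ n ≠ 0 := by positivity
    have hq0 : q ≠ 0 := ne_of_gt h0
    field_simp
    ring

lemma exists_expansion (hq : 1 < q) (hq2 : q < 2) {y : ℝ} (hy : y ∈ Icc 0 (1/(q-1))) :
    ∃ d : ℕ → ℕ, (∀ i, d i ≤ 1) ∧ expVal q d = y := by
  have h0 : (0:ℝ) < q := by linarith
  have h1 : (0:ℝ) ≤ 1/q := by positivity
  have h2 : 1/q < 1 := by rw [div_lt_one h0]; exact hq
  refine ⟨gdig q y, gdig_le q y, ?_⟩
  have hs := summable_aux hq (gdig q y) (gdig_le q y)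
  have hlim2 : Filter.Tendsto (fun n => grem q y n / q ^ n) Filter.atTop (nhds 0) := by
    have hg : Filter.Tendsto (fun n : ℕ => (1/(q-1)) * (1/q)^n) Filter.atTop (nhds 0) := by
      have := (tendsto_pow_atTop_nhds_zero_of_lt_one h1 h2).const_mul (1/(q-1))
      simpa using this
    refine squeeze_zero (fun n => ?_) (fun n => ?_) hg
    · have := (grem_mem hq hq2 hy n).1
      positivity
    · have hb := (grem_mem hq hq2 hy n).2
      have : (1/(q-1)) * (1/q)^n = (1/(q-1)) / q^n := by
        rw [div_pow, one_pow, div_mul_div_comm, one_mul, div_div]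
      rw [this]
      gcongr
  have hlim : Filter.Tendsto (fun n => ∑ i ∈ Finset.range n, (gdig q y i : ℝ) / q ^ (i+1))
      Filter.atTop (nhds y) := by
    have := Filter.Tendsto.sub (tendsto_const_nhds (x := y)) hlim2
    rw [sub_zero] at this
    exact this.congr (fun n => (grem_eq hq y n).symm)
  exact tendsto_nhds_unique hs.hasSum.tendsto_sum_nat hlim

variable {q : ℝ}

lemma v_rec (hq : 1 < q) (d : ℕ → ℕ) (hd : ∀ i, d i ≤ 1) (n : ℕ) :
    expVal q (fun i => d (i + n)) = ((d n : ℝ) + expVal q (fun i => d (i + (n+1)))) / q := by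
  have h := expVal_step hq (fun i => d (i + n)) (fun i => hd _)
  simp only [zero_add] at h
  rw [show (fun i => d (i + (n+1))) = (fun i => d (i + 1 + n)) from funext fun i => by congr 1; omega]
  exact h

/-- If `d n = 0` and shifts avoid S, then `expVal (σⁿ d) < 1/q`. -/
lemma v_lt_of_zero (hq : 1 < q) (hq2 : q < 2) (d : ℕ → ℕ) (hd : ∀ i, d i ≤ 1)
    (havoid : ∀ n, expVal q (fun i => d (i + n)) ∉ switchRegion q)
    {n : ℕ} (hn : d n = 0) : expVal q (fun i => d (i + n)) < 1/q := by
  have h0 : (0:ℝ) < q := by linarith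
  have hq1 : (0:ℝ) < q - 1 := by linarith
  have hub : expVal q (fun i => d (i + n)) ≤ 1 / (q^2 - q) := by
    rw [v_rec hq d hd n, hn]
    push_cast
    rw [zero_add]
    have h1 := expVal_le hq (fun i => d (i + (n+1))) (fun i => hd _)
    have h1' : expVal q (fun i => d (i + (n+1))) * (q - 1) ≤ 1 := (le_div_iff₀ hq1).mp h1
    rw [div_le_div_iff₀ h0 (by nlinarith)]
    nlinarith [h1']
  have := havoid n
  rw [switchRegion, mem_Icc] at this
  push_neg at this
  by_contra hcon
  push_neg at hcon
  exact absurd (this hcon) (not_lt.mpr hub)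

/-- If `d n = 1` and shifts avoid S, then `expVal (σ^{n+1} d) > 1/(q-1) - 1`. -/
lemma v_gt_of_one (hq : 1 < q) (hq2 : q < 2) (d : ℕ → ℕ) (hd : ∀ i, d i ≤ 1)
    (havoid : ∀ n, expVal q (fun i => d (i + n)) ∉ switchRegion q)
    {n : ℕ} (hn : d n = 1) : 1/(q-1) - 1 < expVal q (fun i => d (i + (n+1))) := by
  have h0 : (0:ℝ) < q := by linarith
  have hq1 : (0:ℝ) < q - 1 := by linarith
  have hlb : 1/q ≤ expVal q (fun i => d (i + n)) := by
    rw [v_rec hq d hd n, hn]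
    push_cast
    have h1 := expVal_nonneg hq (d := fun i => d (i + (n+1))) (q := q)
    rw [div_le_div_iff₀ h0 h0]
    nlinarith
  have h2 := havoid n
  rw [switchRegion, mem_Icc] at h2
  push_neg at h2
  have h3 : 1 / (q^2 - q) < expVal q (fun i => d (i + n)) := h2 hlb
  have h4 := v_rec hq d hd n
  rw [hn] at h4
  push_cast at h4
  have h5 : 1 / (q^2 - q) = 1/(q-1)/q := by
    rw [div_div]
    congr 1
    ring
  rw [h5] at h3
  rw [h4] at h3
  rw [div_lt_div_iff₀ h0 h0] at h3
  nlinarith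

/-- Pattern exclusion: shifts avoiding S forbids `011` and `100`. -/
lemma no_pattern (hq : 1 < q) (hq2 : q < 2)
    (hk : q^3 - 2*q^2 + q - 1 ≤ 0)
    (d : ℕ → ℕ) (hd : ∀ i, d i ≤ 1)
    (havoid : ∀ n, expVal q (fun i => d (i + n)) ∉ switchRegion q) :
    ∀ j, d j ≠ d (j+1) → d (j+1) ≠ d (j+2) := by
  intro j hsw heq
  have h0 : (0:ℝ) < q := by linarith
  have hq1 : (0:ℝ) < q - 1 := by linarith
  have hd0 := hd j; have hd1 := hd (j+1); have hd2 := hd (j+2)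
  rcases Nat.le_one_iff_eq_zero_or_eq_one.mp hd0 with h|h
  · -- d j = 0, so d (j+1) = 1, d (j+2) = 1
    have e1 : d (j+1) = 1 := by omega
    have e2 : d (j+2) = 1 := by omega
    have hv1 : expVal q (fun i => d (i + j)) < 1/q := v_lt_of_zero hq hq2 d hd havoid h
    have hr0 := v_rec hq d hd j
    have hr1 := v_rec hq d hd (j+1)
    have hr2 := v_rec hq d hd (j+2)
    rw [h] at hr0; rw [e1] at hr1; rw [e2] at hr2
    push_cast at hr0 hr1 hr2
    have hv3 : 1/(q-1) - 1 < expVal q (fun i => d (i + (j+2+1))) :=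
      v_gt_of_one hq hq2 d hd havoid e2
    have hub : expVal q (fun i => d (i + (j+2+1))) ≤ 1/(q-1) :=
      expVal_le hq _ (fun i => hd _)
    -- v j = (0 + v (j+1))/q < 1/q  ⇒ v(j+1) < 1
    rw [hr0] at hv1
    have hv2 : expVal q (fun i => d (i + (j+1))) < 1 := by
      rw [div_lt_div_iff₀ h0 h0] at hv1
      nlinarith
    rw [hr1, hr2] at hv2
    set w := expVal q (fun i => d (i + (j+2+1))) with hw
    -- (1 + (1 + w)/q)/q < 1  with w > 1/(q-1) - 1 : contradiction
    rw [div_lt_one h0] at hv2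
    have h6 : (1 + w)/q < q - 1 := by linarith
    rw [div_lt_iff₀ h0] at h6
    have ha : (1/(q-1)) * (q-1) = 1 := by field_simp
    nlinarith [hv3, ha, mul_pos hq1 h0]
  · -- d j = 1, d (j+1) = 0, d (j+2) = 0
    have e1 : d (j+1) = 0 := by omega
    have e2 : d (j+2) = 0 := by omega
    have hv1 : 1/(q-1) - 1 < expVal q (fun i => d (i + (j+1))) :=
      v_gt_of_one hq hq2 d hd havoid h
    have hv2 : expVal q (fun i => d (i + (j+2))) < 1/q :=
      v_lt_of_zero hq hq2 d hd havoid e2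
    have hr1 := v_rec hq d hd (j+1)
    rw [e1] at hr1; push_cast at hr1
    rw [zero_add] at hr1
    have : expVal q (fun i => d (i + (j+1))) < 1/q^2 := by
      rw [hr1]
      rw [div_lt_div_iff₀ h0 (by positivity)]
      have he : (j+1)+1 = j+2 := by ring
      rw [he]
      have hv2' : (expVal q fun i => d (i + (j + 2))) * q < 1 := (lt_div_iff₀ h0).mp hv2
      nlinarith [hv2', h0]
    have ha : (1/(q-1)) * (q-1) = 1 := by field_simp
    have hb : (1/q^2) * q^2 = 1 := by
      field_simp
    nlinarith [this, hv1, ha, hb, mul_pos hq1 (mul_pos h0 h0)]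

variable {q : ℝ}

lemma modify_expansion (hq : 1 < q) {x : ℝ} {d : ℕ → ℕ} (hd : d ∈ expansions q x)
    (n : ℕ) {t : ℕ → ℕ} (ht : ∀ i, t i ≤ 1)
    (hv : expVal q t = expVal q (fun i => d (i + n))) :
    (fun i => if i < n then d i else t (i - n)) ∈ expansions q x := by
  obtain ⟨hd1, hd2⟩ := hd
  have hA1 : ∀ i, (if i < n then d i else t (i - n)) ≤ 1 := by
    intro i; split; exacts [hd1 i, ht _]
  refine ⟨hA1, ?_⟩
  have hsplit := expVal_split hq _ hA1 n
  have htail : (fun i => if i + n < n then d (i+n) else t (i + n - n)) = t := by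
    funext i; rw [if_neg (by omega)]; congr 1; omega
  rw [hsplit]
  simp only [htail]
  have hpre : ∀ i ∈ Finset.range n,
      ((if i < n then (d i:ℕ) else t (i - n) : ℕ) : ℝ)/q^(i+1) = ((d i : ℝ)/q^(i+1)) := by
    intro i hi; rw [Finset.mem_range] at hi; rw [if_pos hi]
  rw [Finset.sum_congr rfl hpre, hv, ← expVal_split hq d hd1 n, hd2]

lemma expVal_cons (hq : 1 < q) {s : ℕ} (hs : s ≤ 1) {e : ℕ → ℕ} (he : ∀ i, e i ≤ 1) :
    expVal q (fun j => if j = 0 then s else e (j-1)) = ((s:ℝ) + expVal q e)/q := by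
  have hd : ∀ j, (if j = 0 then s else e (j-1)) ≤ 1 := by
    intro j; split; exacts [hs, he _]
  have h := expVal_step hq _ hd
  have htail : (fun i => if i + 1 = 0 then s else e (i+1-1)) = e := by
    funext i; rw [if_neg (Nat.succ_ne_zero i)]; congr 1
  rw [h]
  rw [htail]
  norm_num

lemma two_expansions (hq : 1 < q) (hq2 : q < 2) {x : ℝ} {d : ℕ → ℕ} (hd : d ∈ expansions q x)
    {n : ℕ} (hS : expVal q (fun i => d (i + n)) ∈ switchRegion q) :
    ∃ A B, A ∈ expansions q x ∧ B ∈ expansions q x ∧ A n = 1 ∧ B n = 0 := by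
  have h0 : (0:ℝ) < q := by linarith
  have hq1 : (0:ℝ) < q - 1 := by linarith
  have hqq : (0:ℝ) < q^2 - q := by nlinarith
  set v := expVal q (fun i => d (i + n)) with hv
  rw [switchRegion, mem_Icc] at hS
  obtain ⟨hS1, hS2⟩ := hS
  have hv0 : (0:ℝ) ≤ v := le_trans (by positivity) hS1
  have hqv : q * v ≤ 1/(q-1) := by
    rw [le_div_iff₀ hq1]
    have : v * (q^2 - q) ≤ 1 := by
      calc v * (q^2-q) ≤ (1/(q^2-q)) * (q^2-q) := by gcongr
      _ = 1 := by field_simp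
    nlinarith
  have hy1 : q*v - 1 ∈ Icc (0:ℝ) (1/(q-1)) := by
    constructor
    · have : (1:ℝ) = (1/q) * q := by field_simp
      nlinarith
    · linarith
  have hy0 : q*v ∈ Icc (0:ℝ) (1/(q-1)) := by
    exact ⟨by positivity, hqv⟩
  obtain ⟨e1, he1, hev1⟩ := exists_expansion hq hq2 hy1
  obtain ⟨e0, he0, hev0⟩ := exists_expansion hq hq2 hy0
  have ht1 : ∀ j, (if j = 0 then 1 else e1 (j-1)) ≤ 1 := by
    intro j; split; exacts [le_refl 1, he1 _]
  have ht0 : ∀ j, (if j = 0 then 0 else e0 (j-1)) ≤ 1 := by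
    intro j; split; exacts [Nat.zero_le 1, he0 _]
  have hvt1 : expVal q (fun j => if j = 0 then 1 else e1 (j-1)) = v := by
    rw [expVal_cons hq (le_refl 1) he1, hev1]
    push_cast
    field_simp; ring
  have hvt0 : expVal q (fun j => if j = 0 then 0 else e0 (j-1)) = v := by
    rw [expVal_cons hq (Nat.zero_le 1) he0, hev0]
    push_cast
    rw [zero_add]
    field_simp
  refine ⟨_, _, modify_expansion hq hd n ht1 (hvt1.trans hv),
          modify_expansion hq hd n ht0 (hvt0.trans hv), ?_, ?_⟩
  · simp
  · simp

lemma exists_switch (hq : 1 < q) {x : ℝ} {d e : ℕ → ℕ} (hd : d ∈ expansions q x)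
    (he : e ∈ expansions q x) (hne : d ≠ e) :
    ∃ n, expVal q (fun i => d (i + n)) ∈ switchRegion q := by
  classical
  have h0 : (0:ℝ) < q := by linarith
  have hq1 : (0:ℝ) < q - 1 := by linarith
  have hqq : (0:ℝ) < q^2 - q := by nlinarith
  have hex : ∃ n, d n ≠ e n := by
    by_contra h; push_neg at h; exact hne (funext h)
  set n := Nat.find hex with hn_def
  have hn : d n ≠ e n := Nat.find_spec hex
  have hmin : ∀ m < n, d m = e m := fun m hm => not_not.mp (Nat.find_min hex hm)
  have h1 := expVal_split hq d hd.1 n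
  have h2 := expVal_split hq e he.1 n
  rw [hd.2] at h1
  rw [he.2] at h2
  have hsum : (∑ i ∈ Finset.range n, ((d i:ℝ))/q^(i+1))
      = ∑ i ∈ Finset.range n, ((e i:ℝ))/q^(i+1) :=
    Finset.sum_congr rfl (fun i hi => by rw [hmin i (Finset.mem_range.mp hi)])
  have hqn : (0:ℝ) < q^n := by positivity
  have hveq : expVal q (fun i => d (i + n)) = expVal q (fun i => e (i + n)) := by
    have h3 := h1.symm.trans h2
    rw [hsum] at h3
    have h4 := add_left_cancel h3
    have h5 := congrArg (· * q^n) h4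
    simpa [div_mul_cancel₀, ne_of_gt hqn] using h5
  refine ⟨n, ?_⟩
  rw [switchRegion, mem_Icc]
  have hvd := v_rec hq d hd.1 n
  have hve := v_rec hq e he.1 n
  have hnonneg_d := expVal_nonneg hq (q := q) (fun i => d (i + (n+1)))
  have hnonneg_e := expVal_nonneg hq (q := q) (fun i => e (i + (n+1)))
  have hle_d := expVal_le hq (fun i => d (i + (n+1))) (fun i => hd.1 _)
  have hle_e := expVal_le hq (fun i => e (i + (n+1))) (fun i => he.1 _)
  have hinv : 1/(q-1)/q = 1/(q^2-q) := by
    rw [div_div]; congr 1; ring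
  have hcases : (d n = 1 ∧ e n = 0) ∨ (d n = 0 ∧ e n = 1) := by
    have := hd.1 n; have := he.1 n; omega
  rcases hcases with ⟨hdn, hen⟩ | ⟨hdn, hen⟩
  · constructor
    · rw [hvd, hdn]
      push_cast
      rw [div_le_div_iff₀ h0 h0]
      nlinarith
    · rw [hveq, hve, hen]
      push_cast
      rw [zero_add, ← hinv]
      gcongr
  · constructor
    · rw [hveq, hve, hen]
      push_cast
      rw [div_le_div_iff₀ h0 h0]
      nlinarith
    · rw [hvd, hdn]
      push_cast
      rw [zero_add, ← hinv]
      gcongr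

variable {q : ℝ}

/-- `(10)^∞` -/
def e10 : ℕ → ℕ := fun i => (i+1) % 2
/-- `(01)^∞` -/
def e01 : ℕ → ℕ := fun i => i % 2
/-- `0^k (10)^∞` -/
def P0 (k : ℕ) : ℕ → ℕ := fun i => if i < k then 0 else (i - k + 1) % 2
/-- `1^k (01)^∞` -/
def P1 (k : ℕ) : ℕ → ℕ := fun i => if i < k then 1 else (i - k) % 2

lemma he10 : ∀ i, e10 i ≤ 1 := fun i => by unfold e10; omega
lemma he01 : ∀ i, e01 i ≤ 1 := fun i => by unfold e01; omega
lemma hP0 (k : ℕ) : ∀ i, P0 k i ≤ 1 := fun i => by unfold P0; split <;> omega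
lemma hP1 (k : ℕ) : ∀ i, P1 k i ≤ 1 := fun i => by unfold P1; split <;> omega

lemma val_e10 (hq : 1 < q) : expVal q e10 = q / (q^2 - 1) := by
  have h0 : (0:ℝ) < q := by linarith
  have h21 : (0:ℝ) < q^2 - 1 := by nlinarith
  have ha := expVal_step hq e10 he10
  have hb := expVal_step hq e01 he01
  have h1 : (fun i => e10 (i+1)) = e01 := by funext i; unfold e10 e01; omega
  have h2 : (fun i => e01 (i+1)) = e10 := by funext i; unfold e10 e01; omega
  rw [h1] at ha; rw [h2] at hb
  have he0 : (e10 0 : ℝ) = 1 := by unfold e10; norm_num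
  have he0' : (e01 0 : ℝ) = 0 := by unfold e01; norm_num
  rw [he0] at ha; rw [he0', zero_add] at hb
  rw [hb] at ha
  -- a = (1 + a/q)/q
  rw [eq_div_iff (ne_of_gt h21)]
  have hq0 : q ≠ 0 := ne_of_gt h0
  field_simp at ha
  nlinarith [ha]

lemma val_e01 (hq : 1 < q) : expVal q e01 = 1 / (q^2 - 1) := by
  have h0 : (0:ℝ) < q := by linarith
  have h21 : (0:ℝ) < q^2 - 1 := by nlinarith
  have hb := expVal_step hq e01 he01
  have h2 : (fun i => e01 (i+1)) = e10 := by funext i; unfold e10 e01; omega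
  rw [h2] at hb
  have he0' : (e01 0 : ℝ) = 0 := by unfold e01; norm_num
  rw [he0', zero_add, val_e10 hq] at hb
  rw [hb, div_div]
  have hne : q^2 - 1 ≠ 0 := ne_of_gt h21
  have hq0 : q ≠ 0 := ne_of_gt h0
  field_simp

lemma P0_zero : P0 0 = e10 := by
  funext i; unfold P0 e10; rw [if_neg (by omega)]; omega

lemma P1_zero : P1 0 = e01 := by
  funext i; unfold P1 e01; rw [if_neg (by omega)]; omega

lemma P0_tail (k : ℕ) : (fun i => P0 (k+1) (i+1)) = P0 k := by
  funext i; unfold P0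
  by_cases h : i < k
  · rw [if_pos (by omega), if_pos h]
  · rw [if_neg (by omega), if_neg h]; omega

lemma P1_tail (k : ℕ) : (fun i => P1 (k+1) (i+1)) = P1 k := by
  funext i; unfold P1
  by_cases h : i < k
  · rw [if_pos (by omega), if_pos h]
  · rw [if_neg (by omega), if_neg h]; omega

lemma val_P0 (hq : 1 < q) : ∀ k, expVal q (P0 k) = q / (q^2 - 1) / q^k := by
  intro k
  induction k with
  | zero => rw [P0_zero, val_e10 hq, pow_zero, div_one]
  | succ k ih =>
    have h := expVal_step hq (P0 (k+1)) (hP0 (k+1))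
    rw [P0_tail k, ih] at h
    have h00 : (P0 (k+1) 0 : ℝ) = 0 := by unfold P0; rw [if_pos (by omega)]; norm_num
    rw [h00, zero_add] at h
    rw [h]
    ring

lemma val_P1_succ (hq : 1 < q) (k : ℕ) :
    expVal q (P1 (k+1)) = (1 + expVal q (P1 k)) / q := by
  have h := expVal_step hq (P1 (k+1)) (hP1 (k+1))
  rw [P1_tail k] at h
  have h00 : (P1 (k+1) 0 : ℝ) = 1 := by unfold P1; rw [if_pos (by omega)]; norm_num
  rw [h00] at h
  exact h

lemma val_P1_ge (hq : 1 < q) : ∀ k, 1/(q^2-1) ≤ expVal q (P1 k) := by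
  have h0 : (0:ℝ) < q := by linarith
  have h21 : (0:ℝ) < q^2 - 1 := by nlinarith
  intro k
  induction k with
  | zero => rw [P1_zero, val_e01 hq]
  | succ k ih =>
    rw [val_P1_succ hq k]
    rw [le_div_iff₀ h0]
    have : 1/(q^2-1) * (q^2 - 1) = 1 := by field_simp
    nlinarith [ih]

/-- main not-in-switch-region facts -/
lemma notin_of_lt {v : ℝ} (hq : 1 < q) (h : v < 1/q) : v ∉ switchRegion q := by
  rw [switchRegion, mem_Icc]; push_neg; intro h'; linarith

lemma notin_of_gt {v : ℝ} (hq : 1 < q) (h : 1/(q^2 - q) < v) : v ∉ switchRegion q := by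
  rw [switchRegion, mem_Icc]; push_neg; intro h'; linarith

lemma e10_notin (hq : 1 < q) (hg : q + 1 < q^2) : expVal q e10 ∉ switchRegion q := by
  have h0 : (0:ℝ) < q := by linarith
  have h21 : (0:ℝ) < q^2 - 1 := by nlinarith
  have hqq : (0:ℝ) < q^2 - q := by nlinarith
  refine notin_of_gt hq ?_
  rw [val_e10 hq, div_lt_div_iff₀ hqq h21]
  nlinarith

lemma e01_notin (hq : 1 < q) (hg : q + 1 < q^2) : expVal q e01 ∉ switchRegion q := by
  have h0 : (0:ℝ) < q := by linarith
  have h21 : (0:ℝ) < q^2 - 1 := by nlinarith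
  refine notin_of_lt hq ?_
  rw [val_e01 hq, div_lt_div_iff₀ h21 h0]
  nlinarith

lemma P0_notin (hq : 1 < q) (hg : q + 1 < q^2) (k : ℕ) :
    expVal q (P0 k) ∉ switchRegion q := by
  have h0 : (0:ℝ) < q := by linarith
  have h21 : (0:ℝ) < q^2 - 1 := by nlinarith
  match k with
  | 0 => rw [P0_zero]; exact e10_notin hq hg
  | (k+1) =>
    refine notin_of_lt hq ?_
    rw [val_P0 hq]
    have hle : q / (q^2-1) / q^(k+1) ≤ q/(q^2-1)/q^1 := by
      gcongr
      · exact hq.le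
      · omega
    rw [pow_one] at hle
    refine lt_of_le_of_lt hle ?_
    rw [div_div, div_lt_div_iff₀ (by positivity) h0]
    nlinarith

lemma P1_notin (hq : 1 < q) (hg : q + 1 < q^2) (k : ℕ) :
    expVal q (P1 k) ∉ switchRegion q := by
  have h0 : (0:ℝ) < q := by linarith
  have h21 : (0:ℝ) < q^2 - 1 := by nlinarith
  have hqq : (0:ℝ) < q^2 - q := by nlinarith
  match k with
  | 0 => rw [P1_zero]; exact e01_notin hq hg
  | (k+1) =>
    refine notin_of_gt hq ?_
    rw [val_P1_succ hq k]
    have hb := val_P1_ge hq k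
    rw [div_lt_div_iff₀ hqq h0]
    have h1 : 1/(q^2-1) * (q^2-1) = 1 := by field_simp
    nlinarith [mul_le_mul_of_nonneg_right hb (le_of_lt hqq), h1, mul_pos h0 h21, mul_pos hqq h21]

/-- shifts of P0 stay in the families -/
lemma P0_shift (k n : ℕ) :
    (fun i => P0 k (i + n)) = P0 (k - n) ∨ (fun i => P0 k (i + n)) = e10
      ∨ (fun i => P0 k (i + n)) = e01 := by
  by_cases h : n ≤ k
  · left
    funext i; unfold P0
    by_cases h2 : i < k - n
    · rw [if_pos (by omega), if_pos h2]
    · rw [if_neg (by omega), if_neg h2]; omega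
  · by_cases h2 : (n - k) % 2 = 0
    · right; left
      funext i; unfold P0 e10
      rw [if_neg (by omega)]; omega
    · right; right
      funext i; unfold P0 e01
      rw [if_neg (by omega)]; omega

lemma P1_shift (k n : ℕ) :
    (fun i => P1 k (i + n)) = P1 (k - n) ∨ (fun i => P1 k (i + n)) = e10
      ∨ (fun i => P1 k (i + n)) = e01 := by
  by_cases h : n ≤ k
  · left
    funext i; unfold P1
    by_cases h2 : i < k - n
    · rw [if_pos (by omega), if_pos h2]
    · rw [if_neg (by omega), if_neg h2]; omega
  · by_cases h2 : (n - k) % 2 = 0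
    · right; right
      funext i; unfold P1 e01
      rw [if_neg (by omega)]; omega
    · right; left
      funext i; unfold P1 e10
      rw [if_neg (by omega)]; omega

lemma P0_avoid (hq : 1 < q) (hg : q + 1 < q^2) (k : ℕ) :
    ∀ n, expVal q (fun i => P0 k (i + n)) ∉ switchRegion q := by
  intro n
  rcases P0_shift k n with h | h | h <;> rw [h]
  · exact P0_notin hq hg _
  · exact e10_notin hq hg
  · exact e01_notin hq hg

lemma P1_avoid (hq : 1 < q) (hg : q + 1 < q^2) (k : ℕ) :
    ∀ n, expVal q (fun i => P1 k (i + n)) ∉ switchRegion q := by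
  intro n
  rcases P1_shift k n with h | h | h <;> rw [h]
  · exact P1_notin hq hg _
  · exact e10_notin hq hg
  · exact e01_notin hq hg

lemma val_zeros : expVal q (fun _ => 0) = 0 := by
  unfold expVal
  simp

lemma val_ones (hq : 1 < q) : expVal q (fun _ => 1) = 1/(q-1) := by
  have h0 : (0:ℝ) < q := by linarith
  have hq1 : (0:ℝ) < q - 1 := by linarith
  have h := expVal_step hq (fun _ => 1) (fun _ => le_refl 1)
  rw [eq_div_iff (ne_of_gt hq1)]
  push_cast at h
  field_simp at h
  nlinarith [h]

lemma zeros_avoid (hq : 1 < q) :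
    ∀ n, expVal q (fun i => (fun _ => 0) (i + n)) ∉ switchRegion q := by
  intro n
  have : (fun i => (fun _ => (0:ℕ)) (i + n)) = (fun _ => (0:ℕ)) := rfl
  rw [this, val_zeros]
  refine notin_of_lt hq ?_
  positivity

lemma ones_avoid (hq : 1 < q) :
    ∀ n, expVal q (fun i => (fun _ => 1) (i + n)) ∉ switchRegion q := by
  intro n
  have h0 : (0:ℝ) < q := by linarith
  have hq1 : (0:ℝ) < q - 1 := by linarith
  have hqq : (0:ℝ) < q^2 - q := by nlinarith
  have : (fun i => (fun _ => (1:ℕ)) (i + n)) = (fun _ => (1:ℕ)) := rfl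
  rw [this, val_ones hq]
  refine notin_of_gt hq ?_
  rw [div_lt_div_iff₀ hqq hq1]
  nlinarith

/-- classification of pattern-free sequences -/
lemma classify (d : ℕ → ℕ) (hd : ∀ i, d i ≤ 1)
    (hp : ∀ j, d j ≠ d (j+1) → d (j+1) ≠ d (j+2)) :
    d = (fun _ => 0) ∨ d = (fun _ => 1) ∨ (∃ k, d = P0 k) ∨ (∃ k, d = P1 k) := by
  classical
  by_cases hc : ∀ i, d (i+1) = d i
  · have hconst : ∀ i, d i = d 0 := by
      intro i; induction i with
      | zero => rfl
      | succ i ih => rw [hc i, ih]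
    rcases Nat.le_one_iff_eq_zero_or_eq_one.mp (hd 0) with h | h
    · left; funext i; rw [hconst i, h]
    · right; left; funext i; rw [hconst i, h]
  · push_neg at hc
    have hex : ∃ i, d (i+1) ≠ d i := hc
    set k := Nat.find hex with hk
    have hkspec : d (k+1) ≠ d k := Nat.find_spec hex
    have hkmin : ∀ m < k, d (m+1) = d m := fun m hm => not_not.mp (Nat.find_min hex hm)
    have hconst : ∀ i ≤ k, d i = d 0 := by
      intro i hi
      induction i with
      | zero => rfl
      | succ i ih => rw [hkmin i (by omega), ih (by omega)]
    have halt : ∀ j, d (k+j) ≠ d (k+j+1) := by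
      intro j
      induction j with
      | zero =>
        intro h
        simp only [Nat.add_zero] at h
        exact hkspec h.symm
      | succ j ih =>
        have h2 := hp (k+j) ih
        intro hcon
        apply h2
        have e1 : k + (j+1) = k + j + 1 := by ring
        rw [e1] at hcon
        have e2 : k + j + 1 + 1 = k + j + 2 := by omega
        rw [e2] at hcon
        exact hcon
    have hdk : d k = d 0 := hconst k (le_refl k)
    rcases Nat.le_one_iff_eq_zero_or_eq_one.mp (hd 0) with h0 | h0
    · right; right; left
      refine ⟨k+1, ?_⟩
      have hk1 : d (k+1) = 1 := by
        have h1 := hd (k+1)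
        omega
      have hupper : ∀ j, d (k+1+j) = (j+1) % 2 := by
        intro j
        induction j with
        | zero => simpa using hk1
        | succ j ih =>
          have hne := halt (1+j)
          have hb1 := hd (k+1+j)
          have hb2 := hd (k+1+j+1)
          have e : k+(1+j) = k+1+j := by ring
          rw [e] at hne
          have e2 : k+1+(j+1) = k+1+j+1 := by ring
          rw [e2]
          omega
      funext i
      unfold P0
      by_cases hik : i < k+1
      · rw [if_pos hik, hconst i (by omega), h0]
      · rw [if_neg hik]
        have hu := hupper (i - (k+1))
        rw [show k+1+(i-(k+1)) = i from by omega] at hu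
        rw [hu]
    · right; right; right
      refine ⟨k+1, ?_⟩
      have hk1 : d (k+1) = 0 := by
        have h1 := hd (k+1)
        omega
      have hupper : ∀ j, d (k+1+j) = j % 2 := by
        intro j
        induction j with
        | zero => simpa using hk1
        | succ j ih =>
          have hne := halt (1+j)
          have hb1 := hd (k+1+j)
          have hb2 := hd (k+1+j+1)
          have e : k+(1+j) = k+1+j := by ring
          rw [e] at hne
          have e2 : k+1+(j+1) = k+1+j+1 := by ring
          rw [e2]
          omega
      funext i
      unfold P1
      by_cases hik : i < k+1
      · rw [if_pos hik, hconst i (by omega), h0]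
      · rw [if_neg hik]
        have hu := hupper (i - (k+1))
        rw [show k+1+(i-(k+1)) = i from by omega] at hu
        rw [hu]


lemma golden_of_root {q : ℝ} (h1 : 1 < q) (h2 : q < 2) (hr : q^4 = 2*q^2 + q + 1) :
    q + 1 < q^2 := by
  nlinarith [sq_nonneg (q^2 - q - 1), sq_nonneg (q^2 + q + 1), sq_nonneg q, sq_nonneg (q-1), sq_nonneg (q+1)]

lemma key_of_root {q : ℝ} (h1 : 1 < q) (h2 : q < 2) (hr : q^4 = 2*q^2 + q + 1) :
    q^3 - 2*q^2 + q - 1 ≤ 0 := by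
  have h7 : q < 12/7 := by
    nlinarith [sq_nonneg (q - 12/7), sq_nonneg (q^2 - 2), sq_nonneg q, sq_nonneg (q-1),
      mul_pos (sub_pos.mpr h1) (sub_pos.mpr h1)]
  nlinarith [sq_nonneg (q - 12/7), sq_nonneg (q-1), mul_pos (sub_pos.mpr h1) (sub_pos.mpr h1),
    sq_nonneg (q - 3/2)]

end S6

/-- `U₁ = {(0^∞)_{q₂}, (1^∞)_{q₂}} ∪ ⋃_{k≥0} {(0^k(10)^∞)_{q₂}, (1^k(01)^∞)_{q₂}}`. -/
theorem stmt6 (q2 : ℝ) (hq2 : q2 ∈ Set.Ioo (1 : ℝ) 2)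
    (hq2r : q2 ^ 4 = 2 * q2 ^ 2 + q2 + 1) :
    Uset q2 1 =
      {expVal q2 (fun _ => 0), expVal q2 (fun _ => 1)} ∪
        ⋃ k : ℕ, {expVal q2 (prep 0 k (eps 0)), expVal q2 (prep 1 k (fun i => i % 2))} := by
  classical
  obtain ⟨hqa, hqb⟩ := hq2
  have hg : q2 + 1 < q2^2 := S6.golden_of_root hqa hqb hq2r
  have hkey : q2^3 - 2*q2^2 + q2 - 1 ≤ 0 := S6.key_of_root hqa hqb hq2r
  have hb0 : ∀ k, prep 0 k (eps 0) = S6.P0 k := by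
    intro k; funext i; unfold prep eps S6.P0
    by_cases h : i < k
    · rw [if_pos h, if_pos h]
    · rw [if_neg h, if_neg h, if_neg (by omega)]
      omega
  have hb1 : ∀ k, prep 1 k (fun i => i % 2) = S6.P1 k := fun k => rfl
  ext x
  simp only [Uset, mem_setOf_eq, mem_union, mem_insert_iff, mem_singleton_iff, mem_iUnion]
  constructor
  · rintro ⟨hicc, hcard⟩
    rw [Nat.cast_one, Cardinal.eq_one_iff_unique] at hcard
    obtain ⟨hsub, hne⟩ := hcard
    obtain ⟨⟨d, hd⟩⟩ := hne
    have hss : (expansions q2 x).Subsingleton := by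
      rw [← Set.subsingleton_coe]; exact hsub
    have havoid : ∀ n, expVal q2 (fun i => d (i + n)) ∉ switchRegion q2 := by
      intro n hS
      obtain ⟨A, B, hA, hB, hA1, hB0⟩ := S6.two_expansions hqa hqb hd hS
      have hAB := hss hA hB
      rw [hAB] at hA1
      omega
    have hp := S6.no_pattern hqa hqb hkey d hd.1 havoid
    rcases S6.classify d hd.1 hp with hc | hc | ⟨k, hc⟩ | ⟨k, hc⟩
    · exact Or.inl (Or.inl (by rw [← hd.2, hc]))
    · exact Or.inl (Or.inr (by rw [← hd.2, hc]))
    · refine Or.inr ⟨k, Or.inl ?_⟩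
      rw [← hd.2, hc, hb0 k]
    · refine Or.inr ⟨k, Or.inr ?_⟩
      rw [← hd.2, hc, hb1 k]
  · intro hmem
    obtain ⟨D, hDd, havoid, hx⟩ :
        ∃ D : ℕ → ℕ, (∀ i, D i ≤ 1)
          ∧ (∀ n, expVal q2 (fun i => D (i + n)) ∉ switchRegion q2)
          ∧ x = expVal q2 D := by
      rcases hmem with (h | h) | ⟨k, h | h⟩
      · exact ⟨fun _ => 0, fun _ => Nat.zero_le 1, S6.zeros_avoid hqa, h⟩
      · exact ⟨fun _ => 1, fun _ => le_refl 1, S6.ones_avoid hqa, h⟩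
      · exact ⟨S6.P0 k, S6.hP0 k, S6.P0_avoid hqa hg k, by rw [h, hb0 k]⟩
      · exact ⟨S6.P1 k, S6.hP1 k, S6.P1_avoid hqa hg k, by rw [h, hb1 k]⟩
    have hDmem : D ∈ expansions q2 x := ⟨hDd, hx.symm⟩
    have hset : expansions q2 x = {D} := by
      ext e
      simp only [mem_singleton_iff]
      constructor
      · intro he
        by_contra hne
        obtain ⟨n, hS⟩ := S6.exists_switch hqa hDmem he (fun h => hne (h.symm))
        exact havoid n hS
      · intro he; rw [he]; exact hDmem
    refine ⟨?_, ?_⟩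
    · rw [hx]
      exact ⟨S6.expVal_nonneg hqa D, S6.expVal_le hqa D hDd⟩
    · rw [hset, Cardinal.mk_singleton, Nat.cast_one]
end

section
/- Let n ≥ 2 and let η_n = d_1⋯d_n(10)^∞ be a sequence with d_{n−1}d_n = 01 such that (η_n)_{q_2} has exactly two distinct q_2-expansions. If d_1d_2 = 00, then (0η_n)_{q_2} has exactly two distinct q_2-expansions and (1η_n)_{q_2} does not have exactly two distinct q_2-expansions. -/
open Set

section Aux
variable {q : ℝ}

lemma summable_geom_aux (hq1 : 1 < q) : Summable (fun i : ℕ => (1/q)^(i+1)) := by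
  have h0 : (0:ℝ) ≤ 1/q := by positivity
  have h1 : 1/q < 1 := by rw [div_lt_one (by linarith)]; linarith
  simpa [pow_succ, mul_comm] using (summable_geometric_of_lt_one h0 h1).mul_left (1/q)

lemma digit_term_le (hq1 : 1 < q) {d : ℕ → ℕ} (hd : ∀ i, d i ≤ 1) (i : ℕ) :
    (d i : ℝ) / q ^ (i + 1) ≤ (1/q)^(i+1) := by
  have hq0 : (0:ℝ) < q := by linarith
  rw [one_div, inv_pow, inv_eq_one_div]
  gcongr
  exact_mod_cast hd i

lemma summable_digits (hq1 : 1 < q) {d : ℕ → ℕ} (hd : ∀ i, d i ≤ 1) :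
    Summable (fun i => (d i : ℝ) / q ^ (i + 1)) :=
  Summable.of_nonneg_of_le (fun i => by positivity)
    (digit_term_le hq1 hd) (summable_geom_aux hq1)

lemma expVal_nonneg (hq1 : 1 < q) (d : ℕ → ℕ) : 0 ≤ expVal q d := by
  have hq0 : (0:ℝ) < q := by linarith
  exact tsum_nonneg fun i => by positivity

lemma expVal_le (hq1 : 1 < q) {d : ℕ → ℕ} (hd : ∀ i, d i ≤ 1) :
    expVal q d ≤ 1/(q-1) := by
  have hq0 : (0:ℝ) < q := by linarith
  have h0 : (0:ℝ) ≤ 1/q := by positivity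
  have h1 : 1/q < 1 := by rw [div_lt_one (by linarith)]; linarith
  have hg : ∑' i : ℕ, (1/q)^(i+1) = 1/(q-1) := by
    have := tsum_geometric_of_lt_one h0 h1
    calc ∑' i : ℕ, (1/q)^(i+1) = ∑' i : ℕ, (1/q) * (1/q)^i := by
          congr 1; funext i; rw [pow_succ, mul_comm]
      _ = (1/q) * (1 - 1/q)⁻¹ := by rw [tsum_mul_left, this]
      _ = 1/(q-1) := by field_simp
  rw [← hg]
  exact Summable.tsum_le_tsum (digit_term_le hq1 hd) (summable_digits hq1 hd) (summable_geom_aux hq1)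

end Aux

section Aux2
variable {q : ℝ}

lemma prep_digits {d : ℕ → ℕ} (hd : ∀ i, d i ≤ 1) {s : ℕ} (hs : s ≤ 1) :
    ∀ i, prep s 1 d i ≤ 1 := by
  intro i
  unfold prep
  split_ifs <;> [exact hs; exact hd _]

lemma expVal_prep (hq1 : 1 < q) {d : ℕ → ℕ} (hd : ∀ i, d i ≤ 1) {s : ℕ} (hs : s ≤ 1) :
    expVal q (prep s 1 d) = ((s : ℝ) + expVal q d) / q := by
  have hq0 : (0:ℝ) < q := by linarith
  have hsum := summable_digits hq1 (prep_digits hd hs)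
  have h0 : (prep s 1 d 0 : ℝ) / q ^ (0+1) = s / q := by simp [prep]
  have hsucc : ∀ i : ℕ, ((prep s 1 d (i+1) : ℝ)) / q ^ (i+1+1)
      = (1/q) * ((d i : ℝ) / q ^ (i+1)) := by
    intro i
    have : prep s 1 d (i+1) = d i := by simp [prep]
    rw [this]; ring
  have := Summable.tsum_eq_zero_add hsum
  unfold expVal
  rw [this, h0]
  have : ∑' i : ℕ, ((prep s 1 d (i+1) : ℝ)) / q ^ (i+1+1)
      = (1/q) * ∑' i : ℕ, (d i : ℝ) / q ^ (i+1) := by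
    rw [← tsum_mul_left]; exact tsum_congr hsucc
  rw [this]
  show _ = (_ + expVal q d)/q
  unfold expVal
  field_simp

lemma prep_injective (s : ℕ) : Function.Injective (prep s 1) := by
  intro a b h
  funext i
  have := congrFun h (i+1)
  simpa [prep] using this

lemma shift_prep (d : ℕ → ℕ) : d = prep (d 0) 1 (fun i => d (i+1)) := by
  funext i
  cases i with
  | zero => simp [prep]
  | succ j => simp [prep]

lemma expansions_empty_neg (hq1 : 1 < q) {y : ℝ} (hy : y < 0) : expansions q y = ∅ := by
  rw [Set.eq_empty_iff_forall_notMem]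
  rintro d ⟨hd, hval⟩
  have := expVal_nonneg hq1 d
  linarith [hval ▸ this]

lemma expansions_empty_gt (hq1 : 1 < q) {y : ℝ} (hy : 1/(q-1) < y) : expansions q y = ∅ := by
  rw [Set.eq_empty_iff_forall_notMem]
  rintro d ⟨hd, hval⟩
  have := expVal_le hq1 hd
  rw [hval] at this
  linarith

lemma expansions_split (hq1 : 1 < q) (y : ℝ) :
    expansions q y =
      (prep 0 1) '' (expansions q (q*y)) ∪ (prep 1 1) '' (expansions q (q*y - 1)) := by
  have hq0 : (0:ℝ) < q := by linarith
  ext d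
  constructor
  · rintro ⟨hd, hval⟩
    have hdig : ∀ i, (fun i => d (i+1)) i ≤ 1 := fun i => hd (i+1)
    have hval2 : ((d 0 : ℝ) + expVal q (fun i => d (i+1))) / q = y := by
      rw [← expVal_prep hq1 hdig (hd 0), ← shift_prep d]; exact hval
    have hE : expVal q (fun i => d (i+1)) = q * y - d 0 := by
      field_simp at hval2; linarith
    rcases Nat.le_one_iff_eq_zero_or_eq_one.mp (hd 0) with h0 | h1
    · left
      refine ⟨fun i => d (i+1), ⟨hdig, ?_⟩, ?_⟩
      · rw [hE, h0]; push_cast; ring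
      · have hd0 := shift_prep d; rw [h0] at hd0; exact hd0.symm
    · right
      refine ⟨fun i => d (i+1), ⟨hdig, ?_⟩, ?_⟩
      · rw [hE, h1]; push_cast; ring
      · have hd0 := shift_prep d; rw [h1] at hd0; exact hd0.symm
  · rintro (⟨t, ⟨ht, htv⟩, rfl⟩ | ⟨t, ⟨ht, htv⟩, rfl⟩)
    · refine ⟨prep_digits ht (by norm_num), ?_⟩
      rw [expVal_prep hq1 ht (by norm_num), htv]
      push_cast
      field_simp
      ring
    · refine ⟨prep_digits ht (by norm_num), ?_⟩
      rw [expVal_prep hq1 ht (by norm_num), htv]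
      push_cast
      field_simp
      ring

lemma mk_expansions_split (hq1 : 1 < q) (y : ℝ) :
    Cardinal.mk ↥(expansions q y)
      = Cardinal.mk ↥(expansions q (q*y)) + Cardinal.mk ↥(expansions q (q*y - 1)) := by
  rw [expansions_split hq1 y]
  have hdisj : Disjoint ((prep 0 1) '' (expansions q (q*y)))
      ((prep 1 1) '' (expansions q (q*y - 1))) := by
    rw [Set.disjoint_left]
    rintro d ⟨a, _, rfl⟩ ⟨b, _, hb⟩
    have := congrFun hb 0
    simp [prep] at this
  rw [Cardinal.mk_union_of_disjoint hdisj, Cardinal.mk_image_eq (prep_injective 0),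
    Cardinal.mk_image_eq (prep_injective 1)]

end Aux2

section Aux3
variable {q : ℝ}

lemma seqCat_nil (t : ℕ → ℕ) : seqCat [] t = t := by
  funext i; simp [seqCat]

lemma seqCat_cons (a : ℕ) (u : List ℕ) (t : ℕ → ℕ) :
    seqCat (a :: u) t = prep a 1 (seqCat u t) := by
  funext i
  cases i with
  | zero => simp [seqCat, prep]
  | succ j =>
    simp [seqCat, prep, List.getD_cons_succ, Nat.succ_lt_succ_iff, Nat.succ_sub_succ]

lemma seqCat_append (u v : List ℕ) (t : ℕ → ℕ) :
    seqCat (u ++ v) t = seqCat u (seqCat v t) := by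
  induction u with
  | nil => simp [seqCat_nil]
  | cons a u ih => rw [List.cons_append, seqCat_cons, ih, seqCat_cons]

lemma seqCat_digits {u : List ℕ} (hu : ∀ s ∈ u, s ≤ 1) {t : ℕ → ℕ} (ht : ∀ i, t i ≤ 1) :
    ∀ i, seqCat u t i ≤ 1 := by
  induction u with
  | nil => rw [seqCat_nil]; exact ht
  | cons a u ih =>
    rw [seqCat_cons]
    exact prep_digits (ih (fun s hs => hu s (List.mem_cons_of_mem a hs)))
      (hu a List.mem_cons_self)

lemma seqCat_apply_length (u : List ℕ) (t : ℕ → ℕ) : seqCat u t u.length = t 0 := by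
  simp [seqCat]

lemma expVal_seqCat_congr (hq1 : 1 < q) {u : List ℕ} (hu : ∀ s ∈ u, s ≤ 1)
    {t₁ t₂ : ℕ → ℕ} (ht₁ : ∀ i, t₁ i ≤ 1) (ht₂ : ∀ i, t₂ i ≤ 1)
    (h : expVal q t₁ = expVal q t₂) :
    expVal q (seqCat u t₁) = expVal q (seqCat u t₂) := by
  induction u with
  | nil => rw [seqCat_nil, seqCat_nil]; exact h
  | cons a u ih =>
    have ha : a ≤ 1 := hu a List.mem_cons_self
    have hu' : ∀ s ∈ u, s ≤ 1 := fun s hs => hu s (List.mem_cons_of_mem a hs)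
    rw [seqCat_cons, seqCat_cons, expVal_prep hq1 (seqCat_digits hu' ht₁) ha,
      expVal_prep hq1 (seqCat_digits hu' ht₂) ha, ih hu']

lemma eps_zero_digits : ∀ i, eps 0 i ≤ 1 := by
  intro i; simp [eps]; omega

lemma eps_zero_eq : eps 0 = prep 1 1 (prep 0 1 (eps 0)) := by
  funext i
  match i with
  | 0 => simp [eps, prep]
  | 1 => simp [eps, prep]
  | (j+2) => simp [eps, prep]; omega

end Aux3

section Greedy
open Classical in
noncomputable def gR (q y : ℝ) : ℕ → ℝ
  | 0 => y
  | n+1 => q * gR q y n - (if 1 ≤ q * gR q y n then (1:ℝ) else 0)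

open Classical in
noncomputable def gD (q y : ℝ) (n : ℕ) : ℕ := if 1 ≤ q * gR q y n then 1 else 0

variable {q y : ℝ}

lemma gD_le_one (n : ℕ) : gD q y n ≤ 1 := by
  unfold gD; split_ifs <;> norm_num

lemma gR_succ (n : ℕ) : gR q y (n+1) = q * gR q y n - (gD q y n : ℝ) := by
  rw [show gR q y (n+1) = q * gR q y n - (if 1 ≤ q * gR q y n then (1:ℝ) else 0) from rfl,
    gD]
  split_ifs <;> norm_num

lemma gR_bounds (hq1 : 1 < q) (hq2 : q < 2) (h0 : 0 ≤ y) (h1 : y ≤ 1/(q-1)) :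
    ∀ n, 0 ≤ gR q y n ∧ gR q y n ≤ 1/(q-1) := by
  intro n
  induction n with
  | zero => exact ⟨h0, h1⟩
  | succ n ih =>
    have hq0 : (0:ℝ) < q := by linarith
    have hd : (0:ℝ) < q - 1 := by linarith
    have hmul : q * gR q y n ≤ q * (1/(q-1)) := by
      apply mul_le_mul_of_nonneg_left ih.2 (le_of_lt hq0)
    have hkey : q * (1/(q-1)) - 1 = 1/(q-1) := by field_simp; ring
    have h1d : (1:ℝ) ≤ 1/(q-1) := by
      rw [le_div_iff₀ hd]; linarith
    rw [show gR q y (n+1) = q * gR q y n - (if 1 ≤ q * gR q y n then (1:ℝ) else 0) from rfl]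
    split_ifs with h
    · constructor
      · linarith
      · linarith
    · push_neg at h
      constructor
      · have : 0 ≤ q * gR q y n := mul_nonneg (le_of_lt hq0) ih.1
        linarith
      · linarith

lemma gR_partial (hq1 : 1 < q) :
    ∀ n, ∑ i ∈ Finset.range n, (gD q y i : ℝ)/q^(i+1) = y - gR q y n / q^n := by
  have hq0 : (0:ℝ) < q := by linarith
  intro n
  induction n with
  | zero => simp [gR]
  | succ n ih =>
    rw [Finset.sum_range_succ, ih, gR_succ]
    have hqn : q^n ≠ 0 := by positivity
    have hqn1 : q^(n+1) ≠ 0 := by positivity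
    field_simp
    ring

lemma expVal_gD (hq1 : 1 < q) (hq2 : q < 2) (h0 : 0 ≤ y) (h1 : y ≤ 1/(q-1)) :
    expVal q (gD q y) = y := by
  have hq0 : (0:ℝ) < q := by linarith
  have hsum : Summable (fun i => (gD q y i : ℝ)/q^(i+1)) :=
    summable_digits hq1 gD_le_one
  have htend : Filter.Tendsto (fun n => gR q y n / q^n) Filter.atTop (nhds 0) := by
    apply squeeze_zero (fun n => div_nonneg (gR_bounds hq1 hq2 h0 h1 n).1 (by positivity))
      (g := fun n => (1/(q-1)) * (1/q)^n)
    · intro n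
      have hb := (gR_bounds hq1 hq2 h0 h1 n).2
      have h2 : (1/q:ℝ)^n = 1/q^n := by rw [div_pow, one_pow]
      rw [h2, mul_one_div]
      gcongr
    · have : Filter.Tendsto (fun n : ℕ => (1/q)^n) Filter.atTop (nhds 0) :=
        tendsto_pow_atTop_nhds_zero_of_lt_one (by positivity)
          (by rw [div_lt_one hq0]; linarith)
      simpa using this.const_mul (1/(q-1))
  have hps : Filter.Tendsto (fun n => ∑ i ∈ Finset.range n, (gD q y i : ℝ)/q^(i+1))
      Filter.atTop (nhds y) := by
    simp only [gR_partial hq1]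
    simpa using Filter.Tendsto.sub (tendsto_const_nhds (x := y)) htend
  have : HasSum (fun i => (gD q y i : ℝ)/q^(i+1)) y :=
    (Summable.hasSum_iff_tendsto_nat hsum).2 hps
  exact this.tsum_eq

lemma expansions_nonempty (hq1 : 1 < q) (hq2 : q < 2) (h0 : 0 ≤ y) (h1 : y ≤ 1/(q-1)) :
    (expansions q y).Nonempty :=
  ⟨gD q y, gD_le_one, expVal_gD hq1 hq2 h0 h1⟩

end Greedy

section Numeric
variable {q : ℝ}

lemma q_sq_gt (hq : q ∈ Set.Ioo (1:ℝ) 2) (hr : q ^ 4 = 2 * q ^ 2 + q + 1) :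
    q + 1 < q ^ 2 := by
  obtain ⟨h1, h2⟩ := hq
  nlinarith [sq_nonneg q, sq_nonneg (q+1), sq_nonneg (q^2 - q - 1)]

lemma q_gt_17 (hq : q ∈ Set.Ioo (1:ℝ) 2) (hr : q ^ 4 = 2 * q ^ 2 + q + 1) :
    1.70 < q := by
  obtain ⟨h1, h2⟩ := hq
  nlinarith [sq_nonneg (q - 1.7), sq_nonneg (q^2 - 2.89), sq_nonneg (q^2 + q), sq_nonneg (q+1), sq_nonneg (q-1)]

lemma q_lt_172 (hq : q ∈ Set.Ioo (1:ℝ) 2) (hr : q ^ 4 = 2 * q ^ 2 + q + 1) :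
    q < 1.72 := by
  obtain ⟨h1, h2⟩ := hq
  nlinarith [sq_nonneg (q - 1.72), sq_nonneg (q^2 - 2.9584), sq_nonneg (q+1), sq_nonneg (q-1)]

lemma q_cube_bound (hq : q ∈ Set.Ioo (1:ℝ) 2) (hr : q ^ 4 = 2 * q ^ 2 + q + 1) :
    q - 1 ≤ q^2 * (2 - q) := by
  obtain ⟨h1, h2⟩ := hq
  have h17 := q_gt_17 ⟨h1, h2⟩ hr
  have h172 := q_lt_172 ⟨h1, h2⟩ hr
  nlinarith [sq_nonneg (q - 1.71), mul_pos (sub_pos.2 h17) (sub_pos.2 h17)]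

end Numeric

section Zeta
variable {q : ℝ}

lemma expVal_eps0 (hq : q ∈ Set.Ioo (1:ℝ) 2) :
    expVal q (eps 0) = q / (q^2 - 1) := by
  have hq1 : (1:ℝ) < q := hq.1
  have hq0 : (0:ℝ) < q := by linarith
  have h2 : q^2 - 1 ≠ 0 := by nlinarith
  have hpd : ∀ i, prep 0 1 (eps 0) i ≤ 1 := prep_digits eps_zero_digits (by norm_num)
  have hv : expVal q (eps 0)
      = (((1:ℕ):ℝ) + ((((0:ℕ):ℝ) + expVal q (eps 0)) / q)) / q := by
    conv_lhs => rw [eps_zero_eq]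
    rw [expVal_prep hq1 hpd (by norm_num), expVal_prep hq1 eps_zero_digits (by norm_num)]
  push_cast at hv
  rw [eq_div_iff h2]
  field_simp at hv
  linarith

lemma zeta_digits : ∀ i, seqCat [0,1] (eps 0) i ≤ 1 :=
  seqCat_digits (by simp) eps_zero_digits

lemma zeta'_digits : ∀ i, seqCat [1,0,0,0,0] (eps 0) i ≤ 1 :=
  seqCat_digits (by simp) eps_zero_digits

lemma expVal_zeta (hq : q ∈ Set.Ioo (1:ℝ) 2) :
    expVal q (seqCat [0,1] (eps 0)) = (1 + q/(q^2-1)) / q^2 := by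
  have hq1 : (1:ℝ) < q := hq.1
  have hq0 : (0:ℝ) < q := by linarith
  have h2 : q^2 - 1 ≠ 0 := by nlinarith
  rw [show ([0,1] : List ℕ) = 0 :: [1] from rfl, seqCat_cons,
    show seqCat [1] (eps 0) = prep 1 1 (eps 0) by
      rw [show ([1] : List ℕ) = 1 :: ([] : List ℕ) from rfl, seqCat_cons, seqCat_nil],
    expVal_prep hq1 (prep_digits eps_zero_digits (by norm_num)) (by norm_num),
    expVal_prep hq1 eps_zero_digits (by norm_num), expVal_eps0 hq]
  push_cast
  rw [zero_add, div_div, ← pow_two]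

lemma expVal_zeta' (hq : q ∈ Set.Ioo (1:ℝ) 2) :
    expVal q (seqCat [1,0,0,0,0] (eps 0)) = 1/q + (q/(q^2-1))/q^5 := by
  have hq1 : (1:ℝ) < q := hq.1
  have hq0 : (0:ℝ) < q := by linarith
  have h2 : q^2 - 1 ≠ 0 := by nlinarith
  have e0 := eps_zero_digits
  have p1 : ∀ i, prep 0 1 (eps 0) i ≤ 1 := prep_digits e0 (by norm_num)
  have p2 : ∀ i, prep 0 1 (prep 0 1 (eps 0)) i ≤ 1 := prep_digits p1 (by norm_num)
  have p3 : ∀ i, prep 0 1 (prep 0 1 (prep 0 1 (eps 0))) i ≤ 1 := prep_digits p2 (by norm_num)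
  have p4 : ∀ i, prep 0 1 (prep 0 1 (prep 0 1 (prep 0 1 (eps 0)))) i ≤ 1 :=
    prep_digits p3 (by norm_num)
  have hrw : seqCat [1,0,0,0,0] (eps 0)
      = prep 1 1 (prep 0 1 (prep 0 1 (prep 0 1 (prep 0 1 (eps 0))))) := by
    rw [show ([1,0,0,0,0] : List ℕ) = 1 :: 0 :: 0 :: 0 :: 0 :: ([]:List ℕ) from rfl]
    rw [seqCat_cons, seqCat_cons, seqCat_cons, seqCat_cons, seqCat_cons, seqCat_nil]
  rw [hrw, expVal_prep hq1 p4 (by norm_num), expVal_prep hq1 p3 (by norm_num),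
    expVal_prep hq1 p2 (by norm_num), expVal_prep hq1 p1 (by norm_num),
    expVal_prep hq1 e0 (by norm_num), expVal_eps0 hq]
  push_cast
  field_simp
  ring

lemma zeta_eq_zeta' (hq : q ∈ Set.Ioo (1:ℝ) 2) (hr : q ^ 4 = 2 * q ^ 2 + q + 1) :
    expVal q (seqCat [0,1] (eps 0)) = expVal q (seqCat [1,0,0,0,0] (eps 0)) := by
  have hq1 : (1:ℝ) < q := hq.1
  have hq0 : (0:ℝ) < q := by linarith
  have h2 : q^2 - 1 ≠ 0 := by nlinarith
  rw [expVal_zeta hq, expVal_zeta' hq]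
  field_simp
  ring_nf
  linear_combination (1 - q) * hr

end Zeta

section CardAux

lemma card_three_le_two_false : ¬ ((3:Cardinal) ≤ 2) := by
  rw [show (3:Cardinal) = ((3:ℕ):Cardinal) by norm_cast,
    show (2:Cardinal) = ((2:ℕ):Cardinal) by norm_cast, Nat.cast_le]
  norm_num

lemma card_aux1 {a : Cardinal} (h1 : 1 ≤ a) : a + 2 ≠ 2 := by
  intro h
  apply card_three_le_two_false
  calc (3:Cardinal) = 1 + 2 := by norm_num
    _ ≤ a + 2 := by exact add_le_add_left h1 2
    _ = 2 := h

lemma card_aux2 {a b : Cardinal} (h : a + b = 2) (ha : 2 ≤ a) : b = 0 := by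
  by_contra hb
  have h1 : 1 ≤ b := Cardinal.one_le_iff_ne_zero.2 hb
  apply card_three_le_two_false
  calc (3:Cardinal) = 2 + 1 := by norm_num
    _ ≤ a + b := add_le_add ha h1
    _ = 2 := h

end CardAux

section ListAux

lemma getD_drop' (l : List ℕ) (m i : ℕ) (h : m + i < l.length) :
    (l.drop m).getD i 0 = l.getD (m+i) 0 := by
  rw [List.getD_eq_getElem _ _ (by rw [List.length_drop]; omega),
    List.getD_eq_getElem _ _ h, List.getElem_drop]

lemma getD_take' (l : List ℕ) (m i : ℕ) (h1 : i < m) (h2 : i < l.length) :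
    (l.take m).getD i 0 = l.getD i 0 := by
  rw [List.getD_eq_getElem _ _ (by rw [List.length_take]; omega),
    List.getD_eq_getElem _ _ h2, List.getElem_take]

end ListAux

section Bound
variable {q : ℝ}

lemma x_bound (hq : q ∈ Set.Ioo (1:ℝ) 2) (hr : q ^ 4 = 2 * q ^ 2 + q + 1)
    {u : List ℕ} (hu : ∀ s ∈ u, s ≤ 1) (hul : 1 ≤ u.length)
    (hu0 : u.getD 0 0 = 0) (hu1 : 2 ≤ u.length → u.getD 1 0 = 0)
    (htwo : Cardinal.mk ↥(expansions q (expVal q (seqCat u (seqCat [0,1] (eps 0))))) = 2) :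
    expVal q (seqCat u (seqCat [0,1] (eps 0))) ≤ (2-q)/(q-1) := by
  obtain ⟨hq1, hq2⟩ := hq
  have hq0 : (0:ℝ) < q := by linarith
  have hqm1 : (0:ℝ) < q - 1 := by linarith
  have hsq : q + 1 < q ^ 2 := q_sq_gt ⟨hq1, hq2⟩ hr
  have h2m1 : (0:ℝ) < q^2 - 1 := by nlinarith
  set ζ : ℕ → ℕ := seqCat [0,1] (eps 0) with hζdef
  have hζd : ∀ i, ζ i ≤ 1 := zeta_digits
  rcases Nat.lt_or_ge u.length 2 with hk1 | hk2
  · -- u = [0]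
    have hlen1 : u.length = 1 := by omega
    obtain ⟨a, ha⟩ := List.length_eq_one_iff.mp hlen1
    have ha0 : a = 0 := by
      have := hu0; rw [ha] at this; simpa using this
    rw [ha, ha0]
    have hx : expVal q (seqCat [0] ζ) = (((0:ℕ):ℝ) + expVal q ζ)/q := by
      rw [show ([0] : List ℕ) = 0 :: ([] : List ℕ) from rfl, seqCat_cons, seqCat_nil]
      exact expVal_prep hq1 hζd (by norm_num)
    rw [hx, expVal_zeta ⟨hq1, hq2⟩]
    push_cast
    rw [zero_add, div_div, ← pow_succ]
    have hxeq : (1 + q/(q^2-1)) / q^3 = (q^2+q-1)/(q^3*(q^2-1)) := by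
      field_simp
      ring
    rw [hxeq, div_le_div_iff₀ (by positivity) hqm1]
    nlinarith [hr, sq_nonneg (q-1), mul_nonneg (sub_nonneg.2 hq1.le) (sub_nonneg.2 hq2.le)]
  · -- u = 0 :: 0 :: u'
    obtain ⟨a, t, hat⟩ : ∃ a t, u = a :: t := by
      cases u with
      | nil => simp at hul
      | cons a t => exact ⟨a, t, rfl⟩
    obtain ⟨b, u', hbu⟩ : ∃ b u', t = b :: u' := by
      cases t with
      | nil => rw [hat] at hk2; simp at hk2
      | cons b u' => exact ⟨b, u', rfl⟩
    have ha0 : a = 0 := by have := hu0; rw [hat] at this; simpa using this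
    have hb0 : b = 0 := by
      have := hu1 hk2; rw [hat, hbu] at this; simpa using this
    have huu : u = 0 :: 0 :: u' := by rw [hat, hbu, ha0, hb0]
    have hu'd : ∀ s ∈ u', s ≤ 1 := by
      intro s hs; apply hu; rw [huu]; simp [hs]
    have hscd : ∀ i, seqCat u' ζ i ≤ 1 := seqCat_digits hu'd hζd
    set z : ℝ := expVal q (seqCat u' ζ) with hzdef
    have hz0 : 0 ≤ z := expVal_nonneg hq1 _
    have hzle : z ≤ 1/(q-1) := expVal_le hq1 hscd
    set x : ℝ := expVal q (seqCat u ζ) with hxdef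
    have hxz : x = z / q^2 := by
      rw [hxdef, huu, seqCat_cons, seqCat_cons,
        expVal_prep hq1 (prep_digits hscd (by norm_num)) (by norm_num),
        expVal_prep hq1 hscd (by norm_num)]
      push_cast
      rw [zero_add, zero_add, div_div, ← pow_two]
    by_contra hgt
    push_neg at hgt
    -- step 1 : expansions of x = expansions of q x (since q x - 1 < 0)
    have hs1 := mk_expansions_split hq1 x
    have hqx : q * x = z / q := by rw [hxz]; field_simp
    have hqx1 : q * x - 1 < 0 := by
      rw [hqx]
      have : z / q ≤ (1/(q-1))/q := by gcongr
      have h2 : (1/(q-1))/q < 1 := by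
        rw [div_div, div_lt_one (by positivity)]
        nlinarith
      linarith
    rw [expansions_empty_neg hq1 hqx1] at hs1
    simp only [Cardinal.mk_emptyCollection, add_zero] at hs1
    rw [htwo] at hs1
    -- step 2 : split expansions of q x
    have hs2 := mk_expansions_split hq1 (q * x)
    have hqqx : q * (q * x) = z := by rw [hxz]; field_simp
    rw [hqqx, ← hs1] at hs2
    -- expansions of z contains two elements
    have hmem1 : seqCat u' ζ ∈ expansions q z := ⟨hscd, rfl⟩
    have hmem2 : seqCat u' (seqCat [1,0,0,0,0] (eps 0)) ∈ expansions q z := by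
      refine ⟨seqCat_digits hu'd zeta'_digits, ?_⟩
      rw [hzdef]
      exact expVal_seqCat_congr hq1 hu'd zeta'_digits hζd (zeta_eq_zeta' ⟨hq1, hq2⟩ hr).symm
    have hne : seqCat u' ζ ≠ seqCat u' (seqCat [1,0,0,0,0] (eps 0)) := by
      intro h
      have h1 := congrFun h u'.length
      rw [seqCat_apply_length, seqCat_apply_length] at h1
      simp [hζdef, seqCat] at h1
    have hge2 : 2 ≤ Cardinal.mk ↥(expansions q z) := by
      rw [Cardinal.two_le_iff]
      exact ⟨⟨_, hmem1⟩, ⟨_, hmem2⟩, by simp [Subtype.mk_eq_mk, hne]⟩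
    have hzero : Cardinal.mk ↥(expansions q (z - 1)) = 0 := by
      exact card_aux2 hs2.symm hge2
    -- but z - 1 ∈ [0, 1/(q-1)], so it has an expansion
    have hz1 : 1 ≤ z := by
      have hB := q_cube_bound ⟨hq1, hq2⟩ hr
      have hgt' : (2-q) < x * (q-1) := by
        rw [div_lt_iff₀ hqm1] at hgt; linarith
      have hz' : z = q^2 * x := by rw [hxz]; field_simp
      nlinarith [mul_lt_mul_of_pos_left hgt' (show (0:ℝ) < q^2 by positivity)]
    have hnon : (expansions q (z-1)).Nonempty :=
      expansions_nonempty hq1 hq2 (by linarith) (by linarith)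
    rw [Cardinal.mk_eq_zero_iff] at hzero
    obtain ⟨e, he⟩ := hnon
    exact hzero.false ⟨e, he⟩

end Bound


/-- let `η_n = d₁⋯d_n(10)^∞` with `n ≥ 2`, `d_{n-1}d_n = 01`, and suppose
`(η_n)_{q₂}` has exactly two `q₂`-expansions. If `d₁d₂ = 00` then `(0η_n)_{q₂}` has exactly
two `q₂`-expansions while `(1η_n)_{q₂}` does not. -/
theorem stmt10 (q2 : ℝ) (hq2 : q2 ∈ Set.Ioo (1 : ℝ) 2)
    (hq2r : q2 ^ 4 = 2 * q2 ^ 2 + q2 + 1)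
    (n : ℕ) (hn : 2 ≤ n) (w : List ℕ) (hlen : w.length = n) (hdig : ∀ s ∈ w, s ≤ 1)
    (hend : w.getD (n - 2) 0 = 0 ∧ w.getD (n - 1) 0 = 1)
    (hstart : w.getD 0 0 = 0 ∧ w.getD 1 0 = 0)
    (htwo : Cardinal.mk ↥(expansions q2 (expVal q2 (seqCat w (eps 0)))) = 2) :
    Cardinal.mk ↥(expansions q2 (expVal q2 (prep 0 1 (seqCat w (eps 0))))) = 2 ∧
      Cardinal.mk ↥(expansions q2 (expVal q2 (prep 1 1 (seqCat w (eps 0))))) ≠ 2 := by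
  obtain ⟨hq1, hqlt2⟩ := hq2
  have hq0 : (0:ℝ) < q2 := by linarith
  have hqm1 : (0:ℝ) < q2 - 1 := by linarith
  have h17 : (1.70:ℝ) < q2 := q_gt_17 ⟨hq1, hqlt2⟩ hq2r
  -- n = 2 is impossible
  have hn3 : 3 ≤ n := by
    by_contra h
    push_neg at h
    have hn2 : n = 2 := by omega
    have h1 : w.getD 1 0 = 1 := by
      have := hend.2; rwa [hn2] at this
    rw [hstart.2] at h1
    exact absurd h1 (by norm_num)
  -- decompose w = u ++ [0,1]
  have hdl : (w.drop (n-2)).length = 2 := by rw [List.length_drop, hlen]; omega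
  obtain ⟨a, b, hab⟩ := List.length_eq_two.mp hdl
  have ha : a = 0 := by
    have h1 : (w.drop (n-2)).getD 0 0 = w.getD (n-2) 0 := by
      apply getD_drop'; omega
    rw [hab, hend.1] at h1; simpa using h1
  have hb : b = 1 := by
    have h1 : (w.drop (n-2)).getD 1 0 = w.getD (n-2+1) 0 := by
      apply getD_drop'; omega
    rw [hab, show n-2+1 = n-1 by omega, hend.2] at h1; simpa using h1
  have hw : w = w.take (n-2) ++ [0, 1] := by
    conv_lhs => rw [← List.take_append_drop (n-2) w]
    rw [hab, ha, hb]
  set u : List ℕ := w.take (n-2) with hudef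
  have hul : u.length = n - 2 := by rw [hudef, List.length_take, hlen]; omega
  have hu : ∀ s ∈ u, s ≤ 1 := fun s hs => hdig s (List.take_subset _ _ hs)
  have hu0 : u.getD 0 0 = 0 := by
    rw [hudef, getD_take' w (n-2) 0 (by omega) (by omega)]; exact hstart.1
  have hu1 : 2 ≤ u.length → u.getD 1 0 = 0 := by
    intro h
    rw [hudef, getD_take' w (n-2) 1 (by omega) (by omega)]; exact hstart.2
  have hηζ : seqCat w (eps 0) = seqCat u (seqCat [0,1] (eps 0)) := by
    conv_lhs => rw [hw]
    rw [seqCat_append]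
  set x : ℝ := expVal q2 (seqCat w (eps 0)) with hxdef
  have hηd : ∀ i, seqCat w (eps 0) i ≤ 1 := seqCat_digits hdig eps_zero_digits
  have hx0 : 0 ≤ x := expVal_nonneg hq1 _
  have hxb : x ≤ (2 - q2)/(q2 - 1) := by
    rw [hxdef, hηζ]
    apply x_bound ⟨hq1, hqlt2⟩ hq2r hu (by omega) hu0 hu1
    rw [← hηζ]
    exact htwo
  have hx1 : x < 1 := by
    have : (2 - q2)/(q2 - 1) < 1 := by
      rw [div_lt_one hqm1]; linarith
    linarith
  constructor
  · -- zero prepended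
    have hval0 : expVal q2 (prep 0 1 (seqCat w (eps 0)))
        = (((0:ℕ):ℝ) + x)/q2 := expVal_prep hq1 hηd (by norm_num)
    have hs := mk_expansions_split hq1 (expVal q2 (prep 0 1 (seqCat w (eps 0))))
    have hqv : q2 * expVal q2 (prep 0 1 (seqCat w (eps 0))) = x := by
      rw [hval0]; push_cast; field_simp; ring
    rw [hqv] at hs
    rw [expansions_empty_neg hq1 (by linarith : x - 1 < 0)] at hs
    simp only [Cardinal.mk_emptyCollection, add_zero] at hs
    rw [hs]; exact htwo
  · -- one prepended
    have hval1 : expVal q2 (prep 1 1 (seqCat w (eps 0)))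
        = (((1:ℕ):ℝ) + x)/q2 := expVal_prep hq1 hηd (by norm_num)
    have hs := mk_expansions_split hq1 (expVal q2 (prep 1 1 (seqCat w (eps 0))))
    have hqv : q2 * expVal q2 (prep 1 1 (seqCat w (eps 0))) = 1 + x := by
      rw [hval1]; push_cast; field_simp
    have hqv1 : q2 * expVal q2 (prep 1 1 (seqCat w (eps 0))) - 1 = x := by
      rw [hqv]; ring
    rw [hqv1, hqv, htwo] at hs
    have hnon : (expansions q2 (1 + x)).Nonempty := by
      apply expansions_nonempty hq1 hqlt2 (by linarith)
      have : 1 + (2 - q2)/(q2 - 1) = 1/(q2 - 1) := by field_simp; ring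
      linarith
    have h1le : 1 ≤ Cardinal.mk ↥(expansions q2 (1 + x)) := by
      apply Cardinal.one_le_iff_ne_zero.2
      rw [Cardinal.mk_ne_zero_iff]
      exact Set.nonempty_coe_sort.2 hnon
    rw [hs]
    exact card_aux1 h1le
end

section
/- For x ∈ [0, 1/(q_2−1)]: x is a q_2-null infinite point if and only if 1/(q_2−1) − x is a q_2-null infinite point. -/
open Set

section Aux

variable {q : ℝ}

lemma summable_expTerm (hq : 1 < q) (d : ℕ → ℕ) (hd : ∀ i, d i ≤ 1) :
    Summable (fun i : ℕ => (d i : ℝ) / q ^ (i + 1)) := by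
  have hq0 : (0:ℝ) < q := lt_trans one_pos hq
  have hbase : Summable (fun i : ℕ => (1/q) ^ (i + 1)) := by
    simp only [pow_succ]
    exact (summable_geometric_of_lt_one (by positivity) (by
      rw [div_lt_one hq0]; exact hq)).mul_right _
  apply Summable.of_nonneg_of_le (fun i => by positivity) _ hbase
  intro i
  rw [div_pow, one_pow]
  apply div_le_div_of_nonneg_right _ (by positivity)
  exact_mod_cast hd i

lemma tsum_ones (hq : 1 < q) : ∑' i : ℕ, (1:ℝ) / q ^ (i + 1) = 1 / (q - 1) := by
  have hq0 : (0:ℝ) < q := lt_trans one_pos hq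
  have h1 : (1:ℝ)/q < 1 := by rw [div_lt_one hq0]; exact hq
  have h0 : (0:ℝ) ≤ 1/q := by positivity
  have : ∑' i : ℕ, (1:ℝ) / q ^ (i + 1) = ∑' i : ℕ, (1/q) ^ i * (1/q) := by
    apply tsum_congr; intro i; rw [← pow_succ, div_pow, one_pow]
  rw [this, tsum_mul_right, tsum_geometric_of_lt_one h0 h1]
  have hq1 : q - 1 ≠ 0 := sub_ne_zero.2 (ne_of_gt hq)
  field_simp

lemma expVal_refl (hq : 1 < q) (d : ℕ → ℕ) (hd : ∀ i, d i ≤ 1) :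
    expVal q (reflSeq d) = 1 / (q - 1) - expVal q d := by
  have h1 : Summable (fun i : ℕ => (reflSeq d i : ℝ) / q ^ (i + 1)) :=
    summable_expTerm hq _ (fun i => by simp [reflSeq])
  have h2 : Summable (fun i : ℕ => (d i : ℝ) / q ^ (i + 1)) := summable_expTerm hq d hd
  have key : expVal q (reflSeq d) + expVal q d = 1 / (q - 1) := by
    rw [expVal, expVal, ← Summable.tsum_add h1 h2, ← tsum_ones hq]
    apply tsum_congr; intro i
    have : ((reflSeq d i : ℝ)) = 1 - (d i : ℝ) := by
      simp only [reflSeq]; rw [Nat.cast_sub (hd i)]; norm_num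
    rw [this]; ring
  linarith

lemma mem_expansions_refl (hq : 1 < q) {x : ℝ} {d : ℕ → ℕ} (h : d ∈ expansions q x) :
    reflSeq d ∈ expansions q (1 / (q - 1) - x) := by
  obtain ⟨hd, hv⟩ := h
  exact ⟨fun i => by simp [reflSeq], by rw [expVal_refl hq d hd, hv]⟩

lemma reflSeq_involutive {d : ℕ → ℕ} (hd : ∀ i, d i ≤ 1) : reflSeq (reflSeq d) = d := by
  funext i; have := hd i; simp only [reflSeq]; omega

lemma expansions_refl_eq (hq : 1 < q) (x : ℝ) :
    expansions q (1 / (q - 1) - x) = reflSeq '' expansions q x := by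
  ext e
  constructor
  · intro he
    refine ⟨reflSeq e, ?_, reflSeq_involutive he.1⟩
    have := mem_expansions_refl hq he
    rwa [sub_sub_cancel] at this
  · rintro ⟨d, hd, rfl⟩
    exact mem_expansions_refl hq hd

lemma reflSeq_injOn (x : ℝ) : Set.InjOn reflSeq (expansions q x) := by
  intro d hd e he h
  funext i
  have h1 := hd.1 i; have h2 := he.1 i
  have := congrFun h i
  simp only [reflSeq] at this
  omega

lemma finite_expansions_refl_iff (hq : 1 < q) (x : ℝ) :
    (expansions q (1 / (q - 1) - x)).Finite ↔ (expansions q x).Finite := by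
  constructor
  · intro h
    have h2 : (expansions q (1 / (q - 1) - (1 / (q - 1) - x))).Finite := by
      rw [expansions_refl_eq hq]; exact h.image _
    rwa [sub_sub_cancel] at h2
  · intro h
    rw [expansions_refl_eq hq]; exact h.image _

lemma Tmap_refl (hq : 1 < q) {s : ℕ} (hs : s ≤ 1) (y : ℝ) :
    Tmap q s (1 / (q - 1) - y) = 1 / (q - 1) - Tmap q (1 - s) y := by
  have hq1 : q - 1 ≠ 0 := sub_ne_zero.2 (ne_of_gt hq)
  interval_cases s <;> simp only [Tmap] <;> push_cast <;> field_simp <;> ring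

lemma Tword_refl (hq : 1 < q) (w : List ℕ) (hw : ∀ s ∈ w, s ≤ 1) (y : ℝ) :
    Tword q w (1 / (q - 1) - y) = 1 / (q - 1) - Tword q (w.map (fun s => 1 - s)) y := by
  induction w with
  | nil => simp [Tword]
  | cons a w ih =>
    have ha : a ≤ 1 := hw a List.mem_cons_self
    have hw' : ∀ s ∈ w, s ≤ 1 := fun s hs => hw s (List.mem_cons_of_mem a hs)
    show Tmap q a (Tword q w (1 / (q - 1) - y)) = _
    rw [ih hw', Tmap_refl hq ha]
    rfl

lemma switch_refl (hq : 1 < q) (y : ℝ) :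
    1 / (q - 1) - y ∈ switchRegion q ↔ y ∈ switchRegion q := by
  have hq0 : (0:ℝ) < q := lt_trans one_pos hq
  have hq1 : q - 1 ≠ 0 := sub_ne_zero.2 (ne_of_gt hq)
  have hq2 : q ^ 2 - q ≠ 0 := by
    have : q ^ 2 - q = q * (q - 1) := by ring
    rw [this]; exact mul_ne_zero (ne_of_gt hq0) hq1
  have hsum : 1 / q + 1 / (q ^ 2 - q) = 1 / (q - 1) := by
    field_simp
    ring
  simp only [switchRegion, Set.mem_Icc]
  constructor <;> rintro ⟨h1, h2⟩ <;> constructor <;> linarith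

lemma A2_refl (hq : 1 < q) (y : ℝ) :
    1 / (q - 1) - y ∈ A2set q ↔ y ∈ A2set q := by
  have h0 : Tmap q 0 (1 / (q - 1) - y) = 1 / (q - 1) - Tmap q 1 y := by
    simpa using Tmap_refl hq (by norm_num : (0:ℕ) ≤ 1) y
  have h1 : Tmap q 1 (1 / (q - 1) - y) = 1 / (q - 1) - Tmap q 0 y := by
    simpa using Tmap_refl hq (le_refl 1) y
  simp only [A2set, Set.mem_setOf_eq, h0, h1, finite_expansions_refl_iff hq,
    switch_refl hq]
  constructor <;> rintro ⟨hs, hx⟩ <;> exact ⟨hs, hx.symm⟩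

lemma A3_refl (hq : 1 < q) (y : ℝ) :
    1 / (q - 1) - y ∈ A3set q ↔ y ∈ A3set q := by
  have h0 : Tmap q 0 (1 / (q - 1) - y) = 1 / (q - 1) - Tmap q 1 y := by
    simpa using Tmap_refl hq (by norm_num : (0:ℕ) ≤ 1) y
  have h1 : Tmap q 1 (1 / (q - 1) - y) = 1 / (q - 1) - Tmap q 0 y := by
    simpa using Tmap_refl hq (le_refl 1) y
  simp only [A3set, Set.mem_setOf_eq, h0, h1, Set.Infinite,
    finite_expansions_refl_iff hq, switch_refl hq]
  tauto

lemma nullInfinite_refl (hq : 1 < q) (y : ℝ) (h : IsNullInfinite q y) :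
    IsNullInfinite q (1 / (q - 1) - y) := by
  obtain ⟨hinf, hbr⟩ := h
  constructor
  · rw [expansions_refl_eq hq]
    exact hinf.image (reflSeq_injOn y)
  · intro w hw hmem
    rw [Tword_refl hq w hw] at hmem ⊢
    have hw' : ∀ s ∈ w.map (fun s => 1 - s), s ≤ 1 := by
      intro s hs
      simp only [List.mem_map] at hs
      omega
    have hmem' : Tword q (w.map (fun s => 1 - s)) y ∈ A2set q ∪ A3set q := by
      rcases hmem with h | h
      · exact Or.inl ((A2_refl hq _).1 h)
      · exact Or.inr ((A3_refl hq _).1 h)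
    exact (A2_refl hq _).2 (hbr _ hw' hmem')

end Aux

/-- `x ∈ [0, 1/(q₂-1)]` is a `q₂`-null infinite point iff `1/(q₂-1) - x` is. -/
theorem stmt17 (q2 : ℝ) (hq2 : q2 ∈ Set.Ioo (1 : ℝ) 2)
    (hq2r : q2 ^ 4 = 2 * q2 ^ 2 + q2 + 1)
    (x : ℝ) (hx : x ∈ Set.Icc (0 : ℝ) (1 / (q2 - 1))) :
    IsNullInfinite q2 x ↔ IsNullInfinite q2 (1 / (q2 - 1) - x) := by
  have hq : 1 < q2 := hq2.1
  constructor
  · exact nullInfinite_refl hq x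
  · intro h
    have := nullInfinite_refl hq _ h
    rwa [sub_sub_cancel] at this
end
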